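/- arXiv:2001.08468 — 4 statements merged into one kernel-verified Lean document; each statement's English description precedes it below -/
import Mathlib

section
/- Every SMI instance admits at most one SSNM; i.e., if M and M' are both strongly stable noncrossing matchings of the same SMI instance, then M = M'. -/
open scoped Classical

/-- An SMTI instance: men of type `Mty`, women of type `Wty`.
`mpref m w = some r` means `w` appears on `m`'s preference list with rank `r`
(smaller rank = more preferred; equal ranks = tied); `none` means `w` is not on `m`'s list.
Similarly for `wpref`.  A pair is acceptable when each lists the other. -/
structure SMTI (Mty : Type) (Wty : Type) where
  mpref : Mty → Wty → Option ℕ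
  wpref : Wty → Mty → Option ℕ

namespace SMTI

variable {Mty Wty : Type}

/-- Rank of an optional preference-list entry: `⊤` for an absent entry
(so that being single / unacceptable is worse than any listed partner). -/
def rk (o : Option ℕ) : ℕ∞ := o.elim ⊤ (fun r => (r : ℕ∞))

/-- `(m, w)` is an acceptable pair. -/
def Acc (I : SMTI Mty Wty) (m : Mty) (w : Wty) : Prop :=
  (I.mpref m w).isSome ∧ (I.wpref w m).isSome

/-- `M` is a matching: a set of acceptable pairs in which each person appears at most once. -/
def IsMatching (I : SMTI Mty Wty) (M : Finset (Mty × Wty)) : Prop :=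
  (∀ p ∈ M, I.Acc p.1 p.2) ∧
  (∀ p ∈ M, ∀ q ∈ M, (p.1 = q.1 ∨ p.2 = q.2) → p = q)

/-- Two pairs cross iff one pair's man is above the other pair's man
while its woman is below the other pair's woman. -/
def Crossing [Preorder Mty] [Preorder Wty] (p q : Mty × Wty) : Prop :=
  (p.1 < q.1 ∧ q.2 < p.2) ∨ (q.1 < p.1 ∧ p.2 < q.2)

/-- A set of pairs is noncrossing if no two of its pairs cross. -/
def Noncrossing [Preorder Mty] [Preorder Wty] (M : Finset (Mty × Wty)) : Prop :=
  ∀ p ∈ M, ∀ q ∈ M, ¬ Crossing p q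

/-- `(m, w)` is a (weak) blocking pair for `M`: an acceptable pair not in `M`
such that `m` strictly prefers `w` to his partner in `M` (or is single) and
`w` strictly prefers `m` to her partner in `M` (or is single). -/
def Blocks (I : SMTI Mty Wty) (M : Finset (Mty × Wty)) (m : Mty) (w : Wty) : Prop :=
  I.Acc m w ∧ (m, w) ∉ M ∧
  (∀ w', (m, w') ∈ M → rk (I.mpref m w) < rk (I.mpref m w')) ∧
  (∀ m', (m', w) ∈ M → rk (I.wpref w m) < rk (I.wpref w m'))

/-- A noncrossing (weak) blocking pair: a blocking pair crossing no pair of `M`. -/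
def NCBlocks [Preorder Mty] [Preorder Wty] (I : SMTI Mty Wty) (M : Finset (Mty × Wty))
    (m : Mty) (w : Wty) : Prop :=
  I.Blocks M m w ∧ ∀ q ∈ M, ¬ Crossing (m, w) q

/-- A strongly stable noncrossing matching (for SMTI in the weak-stability sense:
a weak-SSNM): a noncrossing matching admitting no (weak) blocking pair at all. -/
def IsSSNM [Preorder Mty] [Preorder Wty] (I : SMTI Mty Wty) (M : Finset (Mty × Wty)) : Prop :=
  I.IsMatching M ∧ Noncrossing M ∧ ∀ m w, ¬ I.Blocks M m w

/-- A weakly stable noncrossing matching: a noncrossing matching admitting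
no noncrossing (weak) blocking pair. -/
def IsWSNM [Preorder Mty] [Preorder Wty] (I : SMTI Mty Wty) (M : Finset (Mty × Wty)) : Prop :=
  I.IsMatching M ∧ Noncrossing M ∧ ∀ m w, ¬ I.NCBlocks M m w

/-- The instance has strict preference lists (no ties), i.e. it is an SMI instance. -/
def NoTies (I : SMTI Mty Wty) : Prop :=
  (∀ m w w', (I.mpref m w).isSome → I.mpref m w = I.mpref m w' → w = w') ∧
  (∀ w m m', (I.wpref w m).isSome → I.wpref w m = I.wpref w m' → m = m')

end SMTI

section Aux

open SMTI

lemma rk_inj {o o' : Option ℕ} (ho : o.isSome) (h : SMTI.rk o = SMTI.rk o') : o = o' := by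
  cases o with
  | none => simp at ho
  | some a =>
    cases o' with
    | none => simp [SMTI.rk] at h
    | some b =>
      simp only [SMTI.rk, Option.elim, Nat.cast_inj] at h
      rw [h]

variable {n : ℕ}

lemma strict_w {I : SMTI (Fin n) (Fin n)} (hI : I.NoTies) {w m m' : Fin n}
    (hm : (I.wpref w m).isSome) (hne : m ≠ m')
    (hle : rk (I.wpref w m) ≤ rk (I.wpref w m')) :
    rk (I.wpref w m) < rk (I.wpref w m') := by
  rcases lt_or_eq_of_le hle with h | h
  · exact h
  · exact absurd (hI.2 w m m' hm (rk_inj hm h)) hne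

lemma strict_m {I : SMTI (Fin n) (Fin n)} (hI : I.NoTies) {m w w' : Fin n}
    (hm : (I.mpref m w).isSome) (hne : w ≠ w')
    (hle : rk (I.mpref m w) ≤ rk (I.mpref m w')) :
    rk (I.mpref m w) < rk (I.mpref m w') := by
  rcases lt_or_eq_of_le hle with h | h
  · exact h
  · exact absurd (hI.1 m w w' hm (rk_inj hm h)) hne

lemma match_right {I : SMTI (Fin n) (Fin n)} {M : Finset (Fin n × Fin n)}
    (hM : I.IsMatching M) {m w w' : Fin n} (h : (m, w) ∈ M) (h' : (m, w') ∈ M) : w = w' :=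
  congrArg Prod.snd (hM.2 _ h _ h' (Or.inl rfl))

lemma match_left {I : SMTI (Fin n) (Fin n)} {M : Finset (Fin n × Fin n)}
    (hM : I.IsMatching M) {m m' w : Fin n} (h : (m, w) ∈ M) (h' : (m', w) ∈ M) : m = m' :=
  congrArg Prod.fst (hM.2 _ h _ h' (Or.inr rfl))

/-- Chasing step: from a woman who prefers her `M'`-partner to her `M`-situation,
produce another such woman. -/
lemma step {I : SMTI (Fin n) (Fin n)} (hI : I.NoTies)
    {M M' : Finset (Fin n × Fin n)} (hM : I.IsSSNM M) (hM' : I.IsSSNM M')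
    {m w : Fin n} (hmem : (m, w) ∈ M') (hnot : (m, w) ∉ M)
    (hpref : ∀ m'', (m'', w) ∈ M → rk (I.wpref w m) < rk (I.wpref w m'')) :
    ∃ w₁ m₃, (m, w₁) ∈ M ∧ (m₃, w₁) ∈ M' ∧ m₃ ≠ m ∧ w₁ ≠ w ∧
      (∀ m'', (m'', w₁) ∈ M → rk (I.wpref w₁ m₃) < rk (I.wpref w₁ m'')) := by
  have hacc : I.Acc m w := hM'.1.1 _ hmem
  have hnb : ¬ I.Blocks M m w := hM.2.2 m w
  have hnC : ¬ ∀ w', (m, w') ∈ M → rk (I.mpref m w) < rk (I.mpref m w') :=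
    fun hC => hnb ⟨hacc, hnot, hC, hpref⟩
  push_neg at hnC
  obtain ⟨w₁, hw₁M, hle⟩ := hnC
  have hw₁ne : w₁ ≠ w := by rintro rfl; exact hnot hw₁M
  have hsome₁ : (I.mpref m w₁).isSome := (hM.1.1 _ hw₁M).1
  have hlt : rk (I.mpref m w₁) < rk (I.mpref m w) := strict_m hI hsome₁ hw₁ne hle
  have hnotM' : (m, w₁) ∉ M' := fun h => hw₁ne (match_right hM'.1 h hmem)
  have hC' : ∀ w', (m, w') ∈ M' → rk (I.mpref m w₁) < rk (I.mpref m w') := by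
    intro w' h
    have := match_right hM'.1 h hmem
    subst this
    exact hlt
  have hnb' : ¬ I.Blocks M' m w₁ := hM'.2.2 m w₁
  have hnD : ¬ ∀ m', (m', w₁) ∈ M' → rk (I.wpref w₁ m) < rk (I.wpref w₁ m') :=
    fun hD => hnb' ⟨hM.1.1 _ hw₁M, hnotM', hC', hD⟩
  push_neg at hnD
  obtain ⟨m₃, hm₃, hle'⟩ := hnD
  have hm₃ne : m₃ ≠ m := by rintro rfl; exact hnotM' hm₃
  have hsome₃ : (I.wpref w₁ m₃).isSome := (hM'.1.1 _ hm₃).2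
  have hlt' : rk (I.wpref w₁ m₃) < rk (I.wpref w₁ m) := strict_w hI hsome₃ hm₃ne hle'
  refine ⟨w₁, m₃, hw₁M, hm₃, hm₃ne, hw₁ne, ?_⟩
  intro m'' h
  have := match_left hM.1 hw₁M h
  subst this
  exact hlt'

/-- No "rightward" chain seed exists. -/
lemma noR {I : SMTI (Fin n) (Fin n)} (hI : I.NoTies)
    {M M' : Finset (Fin n × Fin n)} (hM : I.IsSSNM M) (hM' : I.IsSSNM M') :
    ∀ m : Fin n, ¬ ∃ w m₀, (m, w) ∈ M' ∧ (m, w) ∉ M ∧ (m₀, w) ∈ M ∧ m₀ < m ∧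
      (∀ m'', (m'', w) ∈ M → rk (I.wpref w m) < rk (I.wpref w m'')) := by
  by_contra hcon
  push_neg at hcon
  obtain ⟨m0, hm0⟩ := hcon
  set S : Finset (Fin n) := Finset.univ.filter (fun m => ∃ w m₀, (m, w) ∈ M' ∧ (m, w) ∉ M ∧
      (m₀, w) ∈ M ∧ m₀ < m ∧
      (∀ m'', (m'', w) ∈ M → rk (I.wpref w m) < rk (I.wpref w m''))) with hS
  have hSne : S.Nonempty := ⟨m0, Finset.mem_filter.mpr ⟨Finset.mem_univ _, hm0⟩⟩
  set m := S.max' hSne with hm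
  have hmS : m ∈ S := S.max'_mem hSne
  rw [hS, Finset.mem_filter] at hmS
  obtain ⟨-, w, m₀, hmem, hnot, hm₀M, hm₀lt, hpref⟩ := hmS
  obtain ⟨w₁, m₃, hw₁M, hm₃M', hm₃ne, hw₁ne, hpref₁⟩ := step hI hM hM' hmem hnot hpref
  have hww₁ : w < w₁ := by
    have hnc : ¬ SMTI.Crossing (m₀, w) (m, w₁) := hM.2.1 _ hm₀M _ hw₁M
    rcases lt_trichotomy w w₁ with h | h | h
    · exact h
    · exact absurd h.symm hw₁ne
    · exact absurd (Or.inl ⟨hm₀lt, h⟩) hnc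
  have hmm₃ : m < m₃ := by
    have hnc : ¬ SMTI.Crossing (m, w) (m₃, w₁) := hM'.2.1 _ hmem _ hm₃M'
    rcases lt_trichotomy m m₃ with h | h | h
    · exact h
    · exact absurd h hm₃ne.symm
    · exact absurd (Or.inr ⟨h, hww₁⟩) hnc
  have hm₃S : m₃ ∈ S := by
    rw [hS, Finset.mem_filter]
    refine ⟨Finset.mem_univ _, w₁, m, hm₃M', ?_, hw₁M, hmm₃, hpref₁⟩
    intro h
    exact hm₃ne (match_left hM.1 h hw₁M)
  exact absurd (S.le_max' _ hm₃S) (not_le.mpr hmm₃)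

/-- No "leftward" chain seed exists. -/
lemma noL {I : SMTI (Fin n) (Fin n)} (hI : I.NoTies)
    {M M' : Finset (Fin n × Fin n)} (hM : I.IsSSNM M) (hM' : I.IsSSNM M') :
    ∀ m : Fin n, ¬ ∃ w m₀, (m, w) ∈ M' ∧ (m, w) ∉ M ∧ (m₀, w) ∈ M ∧ m < m₀ ∧
      (∀ m'', (m'', w) ∈ M → rk (I.wpref w m) < rk (I.wpref w m'')) := by
  by_contra hcon
  push_neg at hcon
  obtain ⟨m0, hm0⟩ := hcon
  set S : Finset (Fin n) := Finset.univ.filter (fun m => ∃ w m₀, (m, w) ∈ M' ∧ (m, w) ∉ M ∧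
      (m₀, w) ∈ M ∧ m < m₀ ∧
      (∀ m'', (m'', w) ∈ M → rk (I.wpref w m) < rk (I.wpref w m''))) with hS
  have hSne : S.Nonempty := ⟨m0, Finset.mem_filter.mpr ⟨Finset.mem_univ _, hm0⟩⟩
  set m := S.min' hSne with hm
  have hmS : m ∈ S := S.min'_mem hSne
  rw [hS, Finset.mem_filter] at hmS
  obtain ⟨-, w, m₀, hmem, hnot, hm₀M, hm₀lt, hpref⟩ := hmS
  obtain ⟨w₁, m₃, hw₁M, hm₃M', hm₃ne, hw₁ne, hpref₁⟩ := step hI hM hM' hmem hnot hpref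
  have hww₁ : w₁ < w := by
    have hnc : ¬ SMTI.Crossing (m₀, w) (m, w₁) := hM.2.1 _ hm₀M _ hw₁M
    rcases lt_trichotomy w₁ w with h | h | h
    · exact h
    · exact absurd h hw₁ne
    · exact absurd (Or.inr ⟨hm₀lt, h⟩) hnc
  have hmm₃ : m₃ < m := by
    have hnc : ¬ SMTI.Crossing (m, w) (m₃, w₁) := hM'.2.1 _ hmem _ hm₃M'
    rcases lt_trichotomy m₃ m with h | h | h
    · exact h
    · exact absurd h hm₃ne
    · exact absurd (Or.inl ⟨h, hww₁⟩) hnc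
  have hm₃S : m₃ ∈ S := by
    rw [hS, Finset.mem_filter]
    refine ⟨Finset.mem_univ _, w₁, m, hm₃M', ?_, hw₁M, hmm₃, hpref₁⟩
    intro h
    exact hm₃ne (match_left hM.1 h hw₁M)
  exact absurd (S.min'_le _ hm₃S) (not_le.mpr hmm₃)

/-- Key lemma: no woman prefers her `M'`-partner to her `M`-situation. -/
lemma key {I : SMTI (Fin n) (Fin n)} (hI : I.NoTies)
    {M M' : Finset (Fin n × Fin n)} (hM : I.IsSSNM M) (hM' : I.IsSSNM M')
    {m w : Fin n} (hmem : (m, w) ∈ M') (hnot : (m, w) ∉ M)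
    (hpref : ∀ m'', (m'', w) ∈ M → rk (I.wpref w m) < rk (I.wpref w m'')) : False := by
  by_cases hex : ∃ m₀, (m₀, w) ∈ M
  · obtain ⟨m₀, hm₀⟩ := hex
    have hne : m₀ ≠ m := by rintro rfl; exact hnot hm₀
    rcases hne.lt_or_gt with h | h
    · exact noR hI hM hM' m ⟨w, m₀, hmem, hnot, hm₀, h, hpref⟩
    · exact noL hI hM hM' m ⟨w, m₀, hmem, hnot, hm₀, h, hpref⟩
  · obtain ⟨w₁, m₃, hw₁M, hm₃M', hm₃ne, hw₁ne, hpref₁⟩ := step hI hM hM' hmem hnot hpref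
    have hnot₃ : (m₃, w₁) ∉ M := fun h => hm₃ne (match_left hM.1 h hw₁M)
    rcases hm₃ne.lt_or_gt with h | h
    · exact noL hI hM hM' m₃ ⟨w₁, m, hm₃M', hnot₃, hw₁M, h, hpref₁⟩
    · exact noR hI hM hM' m₃ ⟨w₁, m, hm₃M', hnot₃, hw₁M, h, hpref₁⟩

/-- Transposed instance. -/
def trI (I : SMTI (Fin n) (Fin n)) : SMTI (Fin n) (Fin n) := ⟨I.wpref, I.mpref⟩

def trM (M : Finset (Fin n × Fin n)) : Finset (Fin n × Fin n) :=
  M.map (Equiv.prodComm (Fin n) (Fin n)).toEmbedding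

lemma mem_trM {M : Finset (Fin n × Fin n)} {w m : Fin n} :
    (w, m) ∈ trM M ↔ (m, w) ∈ M := by
  simp [trM, Finset.mem_map_equiv]

lemma trI_noTies {I : SMTI (Fin n) (Fin n)} (hI : I.NoTies) : (trI I).NoTies :=
  ⟨hI.2, hI.1⟩

lemma trI_ssnm {I : SMTI (Fin n) (Fin n)} {M : Finset (Fin n × Fin n)}
    (hM : I.IsSSNM M) : (trI I).IsSSNM (trM M) := by
  refine ⟨⟨?_, ?_⟩, ?_, ?_⟩
  · rintro ⟨w, m⟩ hp
    rw [mem_trM] at hp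
    exact ⟨(hM.1.1 _ hp).2, (hM.1.1 _ hp).1⟩
  · rintro ⟨w, m⟩ hp ⟨w', m'⟩ hq hor
    rw [mem_trM] at hp
    rw [mem_trM] at hq
    have := hM.1.2 _ hp _ hq (Or.symm hor)
    rw [Prod.ext_iff] at this ⊢
    exact ⟨this.2, this.1⟩
  · rintro ⟨w, m⟩ hp ⟨w', m'⟩ hq hc
    rw [mem_trM] at hp
    rw [mem_trM] at hq
    refine hM.2.1 _ hp _ hq ?_
    rw [SMTI.Crossing] at hc ⊢
    tauto
  · rintro w m ⟨⟨ha1, ha2⟩, hnot, hc, hd⟩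
    refine hM.2.2 m w ⟨⟨ha2, ha1⟩, fun h => hnot (mem_trM.mpr h), ?_, ?_⟩
    · intro w' h
      exact hd w' (mem_trM.mpr h)
    · intro m' h
      exact hc m' (mem_trM.mpr h)

lemma subset_of {I : SMTI (Fin n) (Fin n)} (hI : I.NoTies)
    {M M' : Finset (Fin n × Fin n)} (hM : I.IsSSNM M) (hM' : I.IsSSNM M') : M ⊆ M' := by
  rintro ⟨m, w⟩ hp
  by_contra hnot
  have hacc : I.Acc m w := hM.1.1 _ hp
  by_cases hC : ∀ w', (m, w') ∈ M' → rk (I.mpref m w) < rk (I.mpref m w')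
  · have hnD : ¬ ∀ m', (m', w) ∈ M' → rk (I.wpref w m) < rk (I.wpref w m') :=
      fun hD => hM'.2.2 m w ⟨hacc, hnot, hC, hD⟩
    push_neg at hnD
    obtain ⟨m', hm', hle⟩ := hnD
    have hne : m' ≠ m := by rintro rfl; exact hnot hm'
    have hsome : (I.wpref w m').isSome := (hM'.1.1 _ hm').2
    have hlt : rk (I.wpref w m') < rk (I.wpref w m) := strict_w hI hsome hne hle
    have hnotM : (m', w) ∉ M := fun h => hne (match_left hM.1 h hp)
    refine key hI hM hM' hm' hnotM ?_
    intro m'' h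
    have := match_left hM.1 hp h
    subst this
    exact hlt
  · push_neg at hC
    obtain ⟨w', hw', hle⟩ := hC
    have hne : w' ≠ w := by rintro rfl; exact hnot hw'
    have hsome : (I.mpref m w').isSome := (hM'.1.1 _ hw').1
    have hlt : rk (I.mpref m w') < rk (I.mpref m w) := strict_m hI hsome hne hle
    have hnotM : (m, w') ∉ M := fun h => hne (match_right hM.1 h hp)
    have hmem' : (w', m) ∈ trM M' := mem_trM.mpr hw'
    have hnotM2 : (w', m) ∉ trM M := fun h => hnotM (mem_trM.mp h)
    refine key (trI_noTies hI) (trI_ssnm hM) (trI_ssnm hM') hmem' hnotM2 ?_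
    intro w'' h
    rw [mem_trM] at h
    have := match_right hM.1 hp h
    subst this
    exact hlt

end Aux

/-- in an SMI instance, there is at most one strongly stable
noncrossing matching. -/
theorem stmt1 {n : ℕ} (I : SMTI (Fin n) (Fin n)) (hI : I.NoTies)
    (M M' : Finset (Fin n × Fin n)) (hM : I.IsSSNM M) (hM' : I.IsSSNM M') :
    M = M' := by
  have h1 : M ⊆ M' := subset_of hI hM hM'
  have h2 : M' ⊆ M := subset_of hI hM' hM
  exact Finset.Subset.antisymm h1 h2
end

section
/- Let I be an SMI instance, let M_0 be any stable matching of I, let A and B be the sets of men and women matched in M_0, and let N be the order pairing between A and B (the ℓ-th smallest-indexed man of A paired with the ℓ-th smallest-indexed woman of B). Then I admits an SSNM if and only if every pair of N is an acceptable pair and N is a stable matching of I; moreover, in that case N is the unique SSNM of I. -/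
open scoped Classical

/-- The order pairing between two finite sets of men and women:
the `ℓ`-th smallest-indexed man of `A` is paired with the `ℓ`-th
smallest-indexed woman of `B`. -/
def orderPairing {n : ℕ} (A B : Finset (Fin n)) : Finset (Fin n × Fin n) :=
  ((A.sort (· ≤ ·)).zip (B.sort (· ≤ ·))).toFinset


section AuxLemmas

variable {n : ℕ}

lemma rk_lt_top' {o : Option ℕ} (h : o.isSome) : SMTI.rk o < ⊤ := by
  cases o with
  | none => simp at h
  | some a => simp [SMTI.rk]

lemma opt_eq_of_rk_eq {o o' : Option ℕ} (h : o.isSome) (h' : o'.isSome)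
    (he : SMTI.rk o = SMTI.rk o') : o = o' := by
  cases o <;> cases o' <;> simp_all [SMTI.rk]

/-- Rural hospitals, one direction: a man matched in one stable matching
cannot be single in another. -/
lemma rural {Mty Wty : Type} [Finite Mty] [Finite Wty] (I : SMTI Mty Wty) (hI : I.NoTies)
    (M M' : Finset (Mty × Wty)) (hM : I.IsMatching M) (hM' : I.IsMatching M')
    (hs : ∀ m w, ¬ I.Blocks M m w) (hs' : ∀ m w, ¬ I.Blocks M' m w)
    (m0 : Mty) (w0 : Wty) (h0 : (m0, w0) ∈ M) (hsingle : ∀ w, (m0, w) ∉ M') : False := by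
  classical
  set Q : Mty × Wty → Prop := fun p =>
    p ∈ M ∧ ∀ w', (p.1, w') ∈ M' → SMTI.rk (I.mpref p.1 p.2) < SMTI.rk (I.mpref p.1 w')
    with hQdef
  have step : ∀ p, Q p → ∃ m' w', Q (m', w') ∧ (m', p.2) ∈ M' ∧ (m', w') ∈ M := by
    rintro ⟨m, w⟩ ⟨hmem, hpref⟩
    have hacc : I.Acc m w := hM.1 _ hmem
    have hnotin : (m, w) ∉ M' := fun hc => lt_irrefl _ (hpref w hc)
    -- w must have a strictly better partner m' in M'
    have hnD : ¬ (∀ m', (m', w) ∈ M' → SMTI.rk (I.wpref w m) < SMTI.rk (I.wpref w m')) :=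
      fun hD => hs' m w ⟨hacc, hnotin, hpref, hD⟩
    push_neg at hnD
    obtain ⟨m', hm'mem, hm'le⟩ := hnD
    have haccm' : I.Acc m' w := hM'.1 _ hm'mem
    have hne : m' ≠ m := fun he => hnotin (he ▸ hm'mem)
    have hlt : SMTI.rk (I.wpref w m') < SMTI.rk (I.wpref w m) := by
      rcases lt_or_eq_of_le hm'le with h | h
      · exact h
      · exact absurd (hI.2 w m' m haccm'.2 (opt_eq_of_rk_eq haccm'.2 hacc.2 h)) hne
    -- m' must have a strictly better partner w' in M
    have hnotin2 : (m', w) ∉ M := by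
      intro hc
      exact hne (congrArg Prod.fst (hM.2 _ hc _ hmem (Or.inr rfl)))
    have hD2 : ∀ m'', (m'', w) ∈ M → SMTI.rk (I.wpref w m') < SMTI.rk (I.wpref w m'') := by
      intro m'' hm''
      have : m'' = m := congrArg Prod.fst (hM.2 _ hm'' _ hmem (Or.inr rfl))
      rw [this]; exact hlt
    have hnC : ¬ (∀ w', (m', w') ∈ M → SMTI.rk (I.mpref m' w) < SMTI.rk (I.mpref m' w')) :=
      fun hC => hs m' w ⟨haccm', hnotin2, hC, hD2⟩
    push_neg at hnC
    obtain ⟨w', hw'mem, hw'le⟩ := hnC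
    have haccw' : I.Acc m' w' := hM.1 _ hw'mem
    have hnew : w' ≠ w := fun he => hnotin2 (he ▸ hw'mem)
    have hltw : SMTI.rk (I.mpref m' w') < SMTI.rk (I.mpref m' w) := by
      rcases lt_or_eq_of_le hw'le with h | h
      · exact h
      · exact absurd (hI.1 m' w' w haccw'.1 (opt_eq_of_rk_eq haccw'.1 haccm'.1 h)) hnew
    refine ⟨m', w', ⟨hw'mem, ?_⟩, hm'mem, hw'mem⟩
    intro w'' hw''
    have : w'' = w := congrArg Prod.snd (hM'.2 _ hw'' _ hm'mem (Or.inl rfl))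
    rw [this]; exact hltw
  have Q0 : Q (m0, w0) := ⟨h0, fun w' hw' => absurd hw' (hsingle w')⟩
  choose f g hQf hmem' hmemM using step
  let F : {p // Q p} → {p // Q p} := fun x => ⟨(f x.1 x.2, g x.1 x.2), hQf x.1 x.2⟩
  have hFinj : Function.Injective F := by
    rintro ⟨p, hp⟩ ⟨q, hq⟩ he
    simp only [F, Subtype.mk.injEq, Prod.mk.injEq] at he
    obtain ⟨h1, _⟩ := he
    have e2 : p.2 = q.2 :=
      (Prod.ext_iff.mp (hM'.2 _ (hmem' p hp) _ (hmem' q hq) (Or.inl h1))).2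
    have : p = q := hM.2 _ hp.1 _ hq.1 (Or.inr e2)
    exact Subtype.ext this
  obtain ⟨x, hx⟩ := Finite.injective_iff_surjective.mp hFinj ⟨(m0, w0), Q0⟩
  have hmem : (f x.1 x.2, x.1.2) ∈ M' := hmem' x.1 x.2
  have hf : f x.1 x.2 = m0 := congrArg (fun y => y.1.1) hx
  exact hsingle _ (hf ▸ hmem)

/-- The gender-flipped instance. -/
def SMTI.flip {Mty Wty : Type} (I : SMTI Mty Wty) : SMTI Wty Mty := ⟨I.wpref, I.mpref⟩

lemma mem_swap_image {Mty Wty : Type} [DecidableEq Mty] [DecidableEq Wty]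
    {M : Finset (Mty × Wty)} {m : Mty} {w : Wty} :
    (w, m) ∈ M.image Prod.swap ↔ (m, w) ∈ M := by
  constructor
  · intro h
    obtain ⟨p, hp, he⟩ := Finset.mem_image.mp h
    have : p = (m, w) := by
      have := congrArg Prod.swap he
      simpa using this
    exact this ▸ hp
  · intro h
    exact Finset.mem_image.mpr ⟨(m, w), h, rfl⟩

lemma flip_matching {Mty Wty : Type} [DecidableEq Mty] [DecidableEq Wty]
    {I : SMTI Mty Wty} {M : Finset (Mty × Wty)} (h : I.IsMatching M) :
    I.flip.IsMatching (M.image Prod.swap) := by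
  constructor
  · rintro ⟨w, m⟩ hp
    have hm : (m, w) ∈ M := mem_swap_image.mp hp
    exact ⟨(h.1 _ hm).2, (h.1 _ hm).1⟩
  · rintro ⟨w1, m1⟩ hp ⟨w2, m2⟩ hq hor
    have h1 : (m1, w1) ∈ M := mem_swap_image.mp hp
    have h2 : (m2, w2) ∈ M := mem_swap_image.mp hq
    have : (m1, w1) = (m2, w2) := h.2 _ h1 _ h2 (by
      rcases hor with h' | h'
      · exact Or.inr h'
      · exact Or.inl h')
    obtain ⟨e1, e2⟩ := Prod.ext_iff.mp this
    exact Prod.ext e2 e1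

lemma flip_blocks {Mty Wty : Type} [DecidableEq Mty] [DecidableEq Wty]
    {I : SMTI Mty Wty} {M : Finset (Mty × Wty)} {m : Mty} {w : Wty} :
    I.flip.Blocks (M.image Prod.swap) w m ↔ I.Blocks M m w := by
  unfold SMTI.Blocks
  constructor
  · rintro ⟨hacc, hnotin, hws, hms⟩
    exact ⟨⟨hacc.2, hacc.1⟩, fun hc => hnotin (mem_swap_image.mpr hc),
      fun w' hw' => hms w' (mem_swap_image.mpr hw'),
      fun m' hm' => hws m' (mem_swap_image.mpr hm')⟩
  · rintro ⟨hacc, hnotin, hms, hws⟩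
    exact ⟨⟨hacc.2, hacc.1⟩, fun hc => hnotin (mem_swap_image.mp hc),
      fun m' hm' => hws m' (mem_swap_image.mp hm'),
      fun w' hw' => hms w' (mem_swap_image.mp hw')⟩

lemma flip_noties {Mty Wty : Type} {I : SMTI Mty Wty} (h : I.NoTies) : I.flip.NoTies :=
  ⟨h.2, h.1⟩

lemma sorted_lt_index_lt {l : List (Fin n)} (hs : l.Pairwise (· < ·)) {i j : ℕ}
    (hi : i < l.length) (hj : j < l.length) (h : l[i] < l[j]) : i < j := by
  by_contra hc
  push_neg at hc
  rcases eq_or_lt_of_le hc with he | hlt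
  · subst he; exact absurd h (lt_irrefl _)
  · have := hs.rel_get_of_lt (a := ⟨j, hj⟩) (b := ⟨i, hi⟩) hlt
    simp only [List.get_eq_getElem] at this
    exact absurd this (not_lt.2 h.le)

lemma list_toFinset_image {α β : Type} [DecidableEq α] [DecidableEq β] (l : List α) (f : α → β) :
    l.toFinset.image f = (l.map f).toFinset := by
  ext b; simp

lemma mem_orderPairing {A B : Finset (Fin n)} {p : Fin n × Fin n} :
    p ∈ orderPairing A B ↔ ∃ (i : ℕ) (h1 : i < (A.sort (· ≤ ·)).length)
      (h2 : i < (B.sort (· ≤ ·)).length), p = ((A.sort (· ≤ ·))[i], (B.sort (· ≤ ·))[i]) := by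
  unfold orderPairing
  rw [List.mem_toFinset, List.mem_iff_getElem]
  constructor
  · rintro ⟨i, hi, he⟩
    rw [List.length_zip, lt_min_iff] at hi
    exact ⟨i, hi.1, hi.2, by rw [← he, List.getElem_zip]⟩
  · rintro ⟨i, h1, h2, he⟩
    exact ⟨i, by rw [List.length_zip]; exact lt_min h1 h2, by rw [List.getElem_zip, ← he]⟩

lemma orderPairing_image_fst {A B : Finset (Fin n)} (h : A.card = B.card) :
    (orderPairing A B).image Prod.fst = A := by
  unfold orderPairing
  rw [list_toFinset_image, List.map_fst_zip, Finset.sort_toFinset]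
  simp [Finset.length_sort, h]

lemma orderPairing_image_snd {A B : Finset (Fin n)} (h : A.card = B.card) :
    (orderPairing A B).image Prod.snd = B := by
  unfold orderPairing
  rw [list_toFinset_image, List.map_snd_zip, Finset.sort_toFinset]
  simp [Finset.length_sort, h]

lemma orderPairing_noncrossing (A B : Finset (Fin n)) (p : Fin n × Fin n)
    (hp : p ∈ orderPairing A B) (q : Fin n × Fin n) (hq : q ∈ orderPairing A B) :
    ¬ ((p.1 < q.1 ∧ q.2 < p.2) ∨ (q.1 < p.1 ∧ p.2 < q.2)) := by
  rw [mem_orderPairing] at hp hq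
  obtain ⟨i, hi1, hi2, rfl⟩ := hp
  obtain ⟨j, hj1, hj2, rfl⟩ := hq
  have hA := (Finset.sortedLT_sort A).pairwise
  have hB := (Finset.sortedLT_sort B).pairwise
  rintro (⟨h1, h2⟩ | ⟨h1, h2⟩) <;>
    exact absurd (sorted_lt_index_lt hA ‹_› ‹_› h1) (not_lt.2 (sorted_lt_index_lt hB ‹_› ‹_› h2).le)

lemma orderPairing_inj (A B : Finset (Fin n)) (p : Fin n × Fin n)
    (hp : p ∈ orderPairing A B) (q : Fin n × Fin n) (hq : q ∈ orderPairing A B)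
    (h : p.1 = q.1 ∨ p.2 = q.2) : p = q := by
  rw [mem_orderPairing] at hp hq
  obtain ⟨i, hi1, hi2, rfl⟩ := hp
  obtain ⟨j, hj1, hj2, rfl⟩ := hq
  have : i = j := by
    rcases h with h | h
    · exact List.Nodup.getElem_inj_iff (A.sort_nodup (· ≤ ·)) |>.mp h
    · exact List.Nodup.getElem_inj_iff (B.sort_nodup (· ≤ ·)) |>.mp h
  subst this; rfl

/-- the pair of minima belongs to any nonempty coordinate-injective noncrossing set of pairs -/
lemma min_mem (M : Finset (Fin n × Fin n))
    (hinj : ∀ p ∈ M, ∀ q ∈ M, (p.1 = q.1 ∨ p.2 = q.2) → p = q)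
    (hnc : ∀ p ∈ M, ∀ q ∈ M, ¬ ((p.1 < q.1 ∧ q.2 < p.2) ∨ (q.1 < p.1 ∧ p.2 < q.2)))
    (hne : M.Nonempty) :
    ((M.image Prod.fst).min' (hne.image _), (M.image Prod.snd).min' (hne.image _)) ∈ M := by
  obtain ⟨p, hp, hp1⟩ : ∃ p ∈ M, p.1 = (M.image Prod.fst).min' (hne.image _) := by
    have := Finset.min'_mem (M.image Prod.fst) (hne.image _)
    rw [Finset.mem_image] at this
    obtain ⟨p, hp, he⟩ := this
    exact ⟨p, hp, he⟩
  obtain ⟨q, hq, hq2⟩ : ∃ q ∈ M, q.2 = (M.image Prod.snd).min' (hne.image _) := by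
    have := Finset.min'_mem (M.image Prod.snd) (hne.image _)
    rw [Finset.mem_image] at this
    obtain ⟨q, hq, he⟩ := this
    exact ⟨q, hq, he⟩
  by_cases h : p.2 = (M.image Prod.snd).min' (hne.image _)
  · rw [← hp1, ← h]; simpa using hp
  · exfalso
    have hb : (M.image Prod.snd).min' (hne.image _) < p.2 := by
      refine lt_of_le_of_ne (Finset.min'_le _ _ ?_) (Ne.symm h)
      exact Finset.mem_image_of_mem _ hp
    have ha : p.1 < q.1 := by
      refine lt_of_le_of_ne (hp1 ▸ Finset.min'_le _ _ (Finset.mem_image_of_mem _ hq)) ?_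
      intro he
      exact h (by rw [hinj p hp q hq (Or.inl he), hq2])
    exact hnc p hp q hq (Or.inl ⟨ha, by rw [hq2]; exact hb⟩)

lemma image_erase_fst (M : Finset (Fin n × Fin n))
    (hinj : ∀ p ∈ M, ∀ q ∈ M, (p.1 = q.1 ∨ p.2 = q.2) → p = q)
    (p : Fin n × Fin n) (hp : p ∈ M) :
    (M.erase p).image Prod.fst = (M.image Prod.fst).erase p.1 := by
  ext a
  simp only [Finset.mem_image, Finset.mem_erase]
  constructor
  · rintro ⟨q, ⟨hqp, hq⟩, rfl⟩
    exact ⟨fun he => hqp (hinj q hq p hp (Or.inl he)), q, hq, rfl⟩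
  · rintro ⟨hne, q, hq, rfl⟩
    exact ⟨q, ⟨fun he => hne (by rw [he]), hq⟩, rfl⟩

lemma image_erase_snd (M : Finset (Fin n × Fin n))
    (hinj : ∀ p ∈ M, ∀ q ∈ M, (p.1 = q.1 ∨ p.2 = q.2) → p = q)
    (p : Fin n × Fin n) (hp : p ∈ M) :
    (M.erase p).image Prod.snd = (M.image Prod.snd).erase p.2 := by
  ext a
  simp only [Finset.mem_image, Finset.mem_erase]
  constructor
  · rintro ⟨q, ⟨hqp, hq⟩, rfl⟩
    exact ⟨fun he => hqp (hinj q hq p hp (Or.inr he)), q, hq, rfl⟩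
  · rintro ⟨hne, q, hq, rfl⟩
    exact ⟨q, ⟨fun he => hne (by rw [he]), hq⟩, rfl⟩

/-- noncrossing coordinate-injective sets of pairs with equal coordinate images are equal -/
lemma nc_unique : ∀ (k : ℕ) (M1 M2 : Finset (Fin n × Fin n)), M1.card = k →
    (∀ p ∈ M1, ∀ q ∈ M1, (p.1 = q.1 ∨ p.2 = q.2) → p = q) →
    (∀ p ∈ M1, ∀ q ∈ M1, ¬ ((p.1 < q.1 ∧ q.2 < p.2) ∨ (q.1 < p.1 ∧ p.2 < q.2))) →
    (∀ p ∈ M2, ∀ q ∈ M2, (p.1 = q.1 ∨ p.2 = q.2) → p = q) →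
    (∀ p ∈ M2, ∀ q ∈ M2, ¬ ((p.1 < q.1 ∧ q.2 < p.2) ∨ (q.1 < p.1 ∧ p.2 < q.2))) →
    M1.image Prod.fst = M2.image Prod.fst → M1.image Prod.snd = M2.image Prod.snd →
    M1 = M2 := by
  intro k
  induction k with
  | zero =>
    intro M1 M2 hc _ _ _ _ hA _
    rw [Finset.card_eq_zero] at hc
    subst hc
    have : M2.image Prod.fst = ∅ := by simpa using hA.symm
    rw [Finset.image_eq_empty] at this
    rw [this]
  | succ k ih =>
    intro M1 M2 hc hinj1 hnc1 hinj2 hnc2 hA hB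
    have hne1 : M1.Nonempty := Finset.card_pos.mp (by omega)
    have hne2 : M2.Nonempty := by
      rw [← Finset.image_nonempty (f := Prod.fst), ← hA, Finset.image_nonempty]
      exact hne1
    have h1 := min_mem M1 hinj1 hnc1 hne1
    have h2 := min_mem M2 hinj2 hnc2 hne2
    simp only [← hA, ← hB] at h2
    set p : Fin n × Fin n :=
      ((M1.image Prod.fst).min' (hne1.image _), (M1.image Prod.snd).min' (hne1.image _))
      with hpdef
    have key : M1.erase p = M2.erase p := by
      refine ih (M1.erase p) (M2.erase p) ?_ ?_ ?_ ?_ ?_ ?_ ?_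
      · rw [Finset.card_erase_of_mem h1, hc]; omega
      · exact fun a ha b hb => hinj1 a (Finset.mem_of_mem_erase ha) b (Finset.mem_of_mem_erase hb)
      · exact fun a ha b hb => hnc1 a (Finset.mem_of_mem_erase ha) b (Finset.mem_of_mem_erase hb)
      · exact fun a ha b hb => hinj2 a (Finset.mem_of_mem_erase ha) b (Finset.mem_of_mem_erase hb)
      · exact fun a ha b hb => hnc2 a (Finset.mem_of_mem_erase ha) b (Finset.mem_of_mem_erase hb)
      · rw [image_erase_fst M1 hinj1 p h1, image_erase_fst M2 hinj2 p h2, hA]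
      · rw [image_erase_snd M1 hinj1 p h1, image_erase_snd M2 hinj2 p h2, hB]
    ext x
    by_cases hx : x = p
    · subst hx; simp [h1, h2]
    · constructor
      · intro hx1
        exact Finset.mem_of_mem_erase (key ▸ Finset.mem_erase.mpr ⟨hx, hx1⟩)
      · intro hx2
        exact Finset.mem_of_mem_erase (key ▸ Finset.mem_erase.mpr ⟨hx, hx2⟩ : x ∈ M1.erase p)

end AuxLemmas

/-- given any stable matching `M0` of an SMI instance `I`, with `N` the
order pairing between the matched men and the matched women of `M0`, the instance
admits an SSNM iff every pair of `N` is acceptable and `N` is a stable matching of `I`;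
and in that case `N` is the unique SSNM of `I`. -/
theorem stmt2 {n : ℕ} (I : SMTI (Fin n) (Fin n)) (hI : I.NoTies)
    (M0 : Finset (Fin n × Fin n)) (hM0 : I.IsMatching M0)
    (hstable : ∀ m w, ¬ I.Blocks M0 m w)
    (N : Finset (Fin n × Fin n))
    (hN : N = orderPairing (M0.image Prod.fst) (M0.image Prod.snd)) :
    ((∃ M, I.IsSSNM M) ↔ (I.IsMatching N ∧ ∀ m w, ¬ I.Blocks N m w)) ∧
    ((I.IsMatching N ∧ ∀ m w, ¬ I.Blocks N m w) → ∀ M, (I.IsSSNM M ↔ M = N)) := by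
  classical
  set A := M0.image Prod.fst with hAdef
  set B := M0.image Prod.snd with hBdef
  have hcard : A.card = B.card := by
    rw [hAdef, hBdef, Finset.card_image_of_injOn, Finset.card_image_of_injOn]
    · intro p hp q hq h; exact hM0.2 p hp q hq (Or.inr h)
    · intro p hp q hq h; exact hM0.2 p hp q hq (Or.inl h)
  have hNfst : N.image Prod.fst = A := by rw [hN]; exact orderPairing_image_fst hcard
  have hNsnd : N.image Prod.snd = B := by rw [hN]; exact orderPairing_image_snd hcard
  have hNinj : ∀ p ∈ N, ∀ q ∈ N, (p.1 = q.1 ∨ p.2 = q.2) → p = q := by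
    rw [hN]; exact orderPairing_inj A B
  have hNnc : SMTI.Noncrossing N := by
    rw [hN]; exact fun p hp q hq => orderPairing_noncrossing A B p hp q hq
  have key : ∀ M, I.IsSSNM M → M = N := by
    rintro M ⟨hMm, hMnc, hMs⟩
    have hfst : M.image Prod.fst = A := by
      apply Finset.Subset.antisymm
      · intro m hm
        rw [Finset.mem_image] at hm
        obtain ⟨p, hp, rfl⟩ := hm
        by_contra hcon
        refine rural I hI M M0 hMm hM0 hMs hstable p.1 p.2 hp fun w hw => ?_
        exact hcon (Finset.mem_image.mpr ⟨(p.1, w), hw, rfl⟩)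
      · intro m hm
        rw [hAdef, Finset.mem_image] at hm
        obtain ⟨p, hp, rfl⟩ := hm
        by_contra hcon
        refine rural I hI M0 M hM0 hMm hstable hMs p.1 p.2 hp fun w hw => ?_
        exact hcon (Finset.mem_image.mpr ⟨(p.1, w), hw, rfl⟩)
    have hsnd : M.image Prod.snd = B := by
      have hFm := flip_matching hMm
      have hFm0 := flip_matching hM0
      have hFs : ∀ w m, ¬ I.flip.Blocks (M.image Prod.swap) w m :=
        fun w m hc => hMs m w (flip_blocks.mp hc)
      have hFs0 : ∀ w m, ¬ I.flip.Blocks (M0.image Prod.swap) w m :=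
        fun w m hc => hstable m w (flip_blocks.mp hc)
      apply Finset.Subset.antisymm
      · intro w hw
        rw [Finset.mem_image] at hw
        obtain ⟨p, hp, rfl⟩ := hw
        by_contra hcon
        refine rural I.flip (flip_noties hI) (M.image Prod.swap) (M0.image Prod.swap)
          hFm hFm0 hFs hFs0 p.2 p.1 (mem_swap_image.mpr hp) fun m hm => ?_
        exact hcon (Finset.mem_image.mpr ⟨(m, p.2), mem_swap_image.mp hm, rfl⟩)
      · intro w hw
        rw [hBdef, Finset.mem_image] at hw
        obtain ⟨p, hp, rfl⟩ := hw
        by_contra hcon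
        refine rural I.flip (flip_noties hI) (M0.image Prod.swap) (M.image Prod.swap)
          hFm0 hFm hFs0 hFs p.2 p.1 (mem_swap_image.mpr hp) fun m hm => ?_
        exact hcon (Finset.mem_image.mpr ⟨(m, p.2), mem_swap_image.mp hm, rfl⟩)
    exact nc_unique M.card M N rfl hMm.2 hMnc hNinj hNnc
      (hfst.trans hNfst.symm) (hsnd.trans hNsnd.symm)
  constructor
  · constructor
    · rintro ⟨M, hM⟩
      have hMN := key M hM
      subst hMN
      exact ⟨hM.1, hM.2.2⟩
    · rintro ⟨h1, h2⟩
      exact ⟨N, h1, hNnc, h2⟩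
  · rintro ⟨h1, h2⟩ M
    exact ⟨key M, fun he => he ▸ ⟨h1, hNnc, h2⟩⟩
end

section
/- Consider the SMTI instance with six men placed top to bottom in the order p_1, p_3, a_1, a_2, p_2, p_4 on one line and four women placed top to bottom in the order q_1, q_3, q_2, q_4 on a parallel line, with preference lists: p_1: q_1; a_1: (q_1 q_2) tied; p_2: q_2; p_3: q_3; a_2: (q_3 q_4) tied; p_4: q_4; q_1: a_1, p_1; q_2: a_1, p_2; q_3: a_2, p_3; q_4: a_2, p_4. Then every weak-SSNM of this instance is equal either to M_0 = {(p_1, q_1), (a_1, q_2), (p_3, q_3), (a_2, q_4)} or to M_1 = {(a_1, q_1), (p_2, q_2), (a_2, q_3), (p_4, q_4)}. -/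
open scoped Classical

/-- The variable-gadget instance.  Men, top to bottom (indices `0..5`):
`p₁, p₃, a₁, a₂, p₂, p₄`.  Women, top to bottom (indices `0..3`): `q₁, q₃, q₂, q₄`.
Preference lists: `p₁: q₁`; `a₁: (q₁ q₂)` tied; `p₂: q₂`; `p₃: q₃`; `a₂: (q₃ q₄)` tied;
`p₄: q₄`; `q₁: a₁, p₁`; `q₂: a₁, p₂`; `q₃: a₂, p₃`; `q₄: a₂, p₄`. -/
def inst3 : SMTI (Fin 6) (Fin 4) where
  mpref m w :=
    if (m.val, w.val) ∈ [(0, 0), (2, 0), (2, 2), (4, 2), (1, 1), (3, 1), (3, 3), (5, 3)]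
    then some 0 else none
  wpref w m :=
    if (w.val, m.val) ∈ [(0, 2), (2, 2), (1, 3), (3, 3)] then some 0
    else if (w.val, m.val) ∈ [(0, 0), (2, 4), (1, 1), (3, 5)] then some 1
    else none



section DecInstances
variable {Mty Wty : Type}

instance (I : SMTI Mty Wty) (m : Mty) (w : Wty) : Decidable (I.Acc m w) := by
  unfold SMTI.Acc; exact instDecidableAnd

instance [DecidableEq Mty] [DecidableEq Wty] (I : SMTI Mty Wty) (M : Finset (Mty × Wty)) :
    Decidable (I.IsMatching M) := by
  unfold SMTI.IsMatching; exact instDecidableAnd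

instance [Preorder Mty] [Preorder Wty] [DecidableRel ((· < ·) : Mty → Mty → Prop)]
    [DecidableRel ((· < ·) : Wty → Wty → Prop)] (p q : Mty × Wty) :
    Decidable (SMTI.Crossing p q) := by
  unfold SMTI.Crossing; exact instDecidableOr

instance [Preorder Mty] [Preorder Wty] [DecidableRel ((· < ·) : Mty → Mty → Prop)]
    [DecidableRel ((· < ·) : Wty → Wty → Prop)] (M : Finset (Mty × Wty)) :
    Decidable (SMTI.Noncrossing M) := by
  unfold SMTI.Noncrossing; exact Finset.decidableDforallFinset

instance [DecidableEq Mty] [DecidableEq Wty] [Fintype Mty] [Fintype Wty]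
    (I : SMTI Mty Wty) (M : Finset (Mty × Wty)) (m : Mty) (w : Wty) :
    Decidable (I.Blocks M m w) := by
  unfold SMTI.Blocks
  exact instDecidableAnd

instance [Preorder Mty] [Preorder Wty] [DecidableRel ((· < ·) : Mty → Mty → Prop)]
    [DecidableRel ((· < ·) : Wty → Wty → Prop)] [DecidableEq Mty] [DecidableEq Wty]
    [Fintype Mty] [Fintype Wty] (I : SMTI Mty Wty) (M : Finset (Mty × Wty)) :
    Decidable (I.IsSSNM M) := by
  unfold SMTI.IsSSNM; exact instDecidableAnd

end DecInstances

def accS : Finset (Fin 6 × Fin 4) :=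
  {(0,0),(2,0),(2,2),(4,2),(1,1),(3,1),(3,3),(5,3)}

lemma acc_mem : ∀ p : Fin 6 × Fin 4, inst3.Acc p.1 p.2 → p ∈ accS := by decide

lemma accS_fst0 : ∀ w : Fin 4, ((0:Fin 6), w) ∈ accS → w = 0 := by decide
lemma accS_fst1 : ∀ w : Fin 4, ((1:Fin 6), w) ∈ accS → w = 1 := by decide
lemma accS_fst2 : ∀ w : Fin 4, ((2:Fin 6), w) ∈ accS → w = 0 ∨ w = 2 := by decide
lemma accS_fst3 : ∀ w : Fin 4, ((3:Fin 6), w) ∈ accS → w = 1 ∨ w = 3 := by decide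
lemma accS_fst4 : ∀ w : Fin 4, ((4:Fin 6), w) ∈ accS → w = 2 := by decide
lemma accS_fst5 : ∀ w : Fin 4, ((5:Fin 6), w) ∈ accS → w = 3 := by decide
lemma accS_snd0 : ∀ m : Fin 6, (m, (0:Fin 4)) ∈ accS → m = 0 ∨ m = 2 := by decide
lemma accS_snd1 : ∀ m : Fin 6, (m, (1:Fin 4)) ∈ accS → m = 1 ∨ m = 3 := by decide
lemma accS_snd2 : ∀ m : Fin 6, (m, (2:Fin 4)) ∈ accS → m = 2 ∨ m = 4 := by decide
lemma accS_snd3 : ∀ m : Fin 6, (m, (3:Fin 4)) ∈ accS → m = 3 ∨ m = 5 := by decide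

lemma accS_cases : ∀ p : Fin 6 × Fin 4, p ∈ accS →
    p = (0,0) ∨ p = (2,0) ∨ p = (2,2) ∨ p = (4,2) ∨
    p = (1,1) ∨ p = (3,1) ∨ p = (3,3) ∨ p = (5,3) := by decide

/-- every weak-SSNM of the variable-gadget instance equals either
`M₀ = {(p₁,q₁),(a₁,q₂),(p₃,q₃),(a₂,q₄)}` or `M₁ = {(a₁,q₁),(p₂,q₂),(a₂,q₃),(p₄,q₄)}`. -/
theorem stmt3 (M : Finset (Fin 6 × Fin 4)) (h : inst3.IsSSNM M) :
    M = ({((0 : Fin 6), (0 : Fin 4)), (2, 2), (1, 1), (3, 3)} : Finset (Fin 6 × Fin 4)) ∨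
    M = ({((2 : Fin 6), (0 : Fin 4)), (4, 2), (3, 1), (5, 3)} : Finset (Fin 6 × Fin 4)) := by
  obtain ⟨hM, hNC, hB⟩ := h
  have hsub : ∀ p ∈ M, p ∈ accS := fun p hp => acc_mem p (hM.1 p hp)
  -- every woman is matched
  have F2 : ((0:Fin 6),(0:Fin 4)) ∈ M ∨ ((2:Fin 6),(0:Fin 4)) ∈ M := by
    by_contra hc
    push_neg at hc
    obtain ⟨h1, h2⟩ := hc
    refine hB 0 0 ⟨by decide, h1, ?_, ?_⟩
    · intro w' hw'
      rcases accS_fst0 w' (hsub _ hw') with rfl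
      exact absurd hw' h1
    · intro m' hm'
      rcases accS_snd0 m' (hsub _ hm') with rfl | rfl
      · exact absurd hm' h1
      · exact absurd hm' h2
  have F3 : ((2:Fin 6),(2:Fin 4)) ∈ M ∨ ((4:Fin 6),(2:Fin 4)) ∈ M := by
    by_contra hc
    push_neg at hc
    obtain ⟨h1, h2⟩ := hc
    refine hB 4 2 ⟨by decide, h2, ?_, ?_⟩
    · intro w' hw'
      rcases accS_fst4 w' (hsub _ hw') with rfl
      exact absurd hw' h2
    · intro m' hm'
      rcases accS_snd2 m' (hsub _ hm') with rfl | rfl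
      · exact absurd hm' h1
      · exact absurd hm' h2
  have F4 : ((1:Fin 6),(1:Fin 4)) ∈ M ∨ ((3:Fin 6),(1:Fin 4)) ∈ M := by
    by_contra hc
    push_neg at hc
    obtain ⟨h1, h2⟩ := hc
    refine hB 1 1 ⟨by decide, h1, ?_, ?_⟩
    · intro w' hw'
      rcases accS_fst1 w' (hsub _ hw') with rfl
      exact absurd hw' h1
    · intro m' hm'
      rcases accS_snd1 m' (hsub _ hm') with rfl | rfl
      · exact absurd hm' h1
      · exact absurd hm' h2
  have F5 : ((3:Fin 6),(3:Fin 4)) ∈ M ∨ ((5:Fin 6),(3:Fin 4)) ∈ M := by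
    by_contra hc
    push_neg at hc
    obtain ⟨h1, h2⟩ := hc
    refine hB 5 3 ⟨by decide, h2, ?_, ?_⟩
    · intro w' hw'
      rcases accS_fst5 w' (hsub _ hw') with rfl
      exact absurd hw' h2
    · intro m' hm'
      rcases accS_snd3 m' (hsub _ hm') with rfl | rfl
      · exact absurd hm' h1
      · exact absurd hm' h2
  -- left half resolves to one of two states
  have HL : (((0:Fin 6),(0:Fin 4)) ∈ M ∧ ((2:Fin 6),(2:Fin 4)) ∈ M ∧
              ((2:Fin 6),(0:Fin 4)) ∉ M ∧ ((4:Fin 6),(2:Fin 4)) ∉ M) ∨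
            (((2:Fin 6),(0:Fin 4)) ∈ M ∧ ((4:Fin 6),(2:Fin 4)) ∈ M ∧
              ((0:Fin 6),(0:Fin 4)) ∉ M ∧ ((2:Fin 6),(2:Fin 4)) ∉ M) := by
    rcases F2 with h00 | h20
    · have h20' : ((2:Fin 6),(0:Fin 4)) ∉ M := fun hc =>
        absurd (hM.2 _ h00 _ hc (Or.inr rfl)) (by decide)
      have h22 : ((2:Fin 6),(2:Fin 4)) ∈ M := by
        rcases F3 with h | h42
        · exact h
        · exfalso
          have h22' : ((2:Fin 6),(2:Fin 4)) ∉ M := fun hc =>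
            absurd (hM.2 _ h42 _ hc (Or.inr rfl)) (by decide)
          refine hB 2 2 ⟨by decide, h22', ?_, ?_⟩
          · intro w' hw'
            rcases accS_fst2 w' (hsub _ hw') with rfl | rfl
            · exact absurd hw' h20'
            · exact absurd hw' h22'
          · intro m' hm'
            rcases accS_snd2 m' (hsub _ hm') with rfl | rfl
            · exact absurd hm' h22'
            · exact (by decide : SMTI.rk (inst3.wpref 2 2) < SMTI.rk (inst3.wpref 2 4))
      have h42' : ((4:Fin 6),(2:Fin 4)) ∉ M := fun hc =>
        absurd (hM.2 _ h22 _ hc (Or.inr rfl)) (by decide)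
      exact Or.inl ⟨h00, h22, h20', h42'⟩
    · have h00' : ((0:Fin 6),(0:Fin 4)) ∉ M := fun hc =>
        absurd (hM.2 _ h20 _ hc (Or.inr rfl)) (by decide)
      have h22' : ((2:Fin 6),(2:Fin 4)) ∉ M := fun hc =>
        absurd (hM.2 _ h20 _ hc (Or.inl rfl)) (by decide)
      exact Or.inr ⟨h20, F3.resolve_left h22', h00', h22'⟩
  -- right half resolves to one of two states
  have HR : (((1:Fin 6),(1:Fin 4)) ∈ M ∧ ((3:Fin 6),(3:Fin 4)) ∈ M ∧
              ((3:Fin 6),(1:Fin 4)) ∉ M ∧ ((5:Fin 6),(3:Fin 4)) ∉ M) ∨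
            (((3:Fin 6),(1:Fin 4)) ∈ M ∧ ((5:Fin 6),(3:Fin 4)) ∈ M ∧
              ((1:Fin 6),(1:Fin 4)) ∉ M ∧ ((3:Fin 6),(3:Fin 4)) ∉ M) := by
    rcases F4 with h11 | h31
    · have h31' : ((3:Fin 6),(1:Fin 4)) ∉ M := fun hc =>
        absurd (hM.2 _ h11 _ hc (Or.inr rfl)) (by decide)
      have h33 : ((3:Fin 6),(3:Fin 4)) ∈ M := by
        rcases F5 with h | h53
        · exact h
        · exfalso
          have h33' : ((3:Fin 6),(3:Fin 4)) ∉ M := fun hc =>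
            absurd (hM.2 _ h53 _ hc (Or.inr rfl)) (by decide)
          refine hB 3 3 ⟨by decide, h33', ?_, ?_⟩
          · intro w' hw'
            rcases accS_fst3 w' (hsub _ hw') with rfl | rfl
            · exact absurd hw' h31'
            · exact absurd hw' h33'
          · intro m' hm'
            rcases accS_snd3 m' (hsub _ hm') with rfl | rfl
            · exact absurd hm' h33'
            · exact (by decide : SMTI.rk (inst3.wpref 3 3) < SMTI.rk (inst3.wpref 3 5))
      have h53' : ((5:Fin 6),(3:Fin 4)) ∉ M := fun hc =>
        absurd (hM.2 _ h33 _ hc (Or.inr rfl)) (by decide)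
      exact Or.inl ⟨h11, h33, h31', h53'⟩
    · have h11' : ((1:Fin 6),(1:Fin 4)) ∉ M := fun hc =>
        absurd (hM.2 _ h31 _ hc (Or.inr rfl)) (by decide)
      have h33' : ((3:Fin 6),(3:Fin 4)) ∉ M := fun hc =>
        absurd (hM.2 _ h31 _ hc (Or.inl rfl)) (by decide)
      exact Or.inr ⟨h31, F5.resolve_left h33', h11', h33'⟩
  rcases HL with ⟨h00, h22, h20', h42'⟩ | ⟨h20, h42, h00', h22'⟩ <;>
    rcases HR with ⟨h11, h33, h31', h53'⟩ | ⟨h31, h53, h11', h33'⟩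
  · left
    refine Finset.Subset.antisymm ?_ ?_
    · intro p hp
      rcases accS_cases p (hsub p hp) with rfl|rfl|rfl|rfl|rfl|rfl|rfl|rfl
      · decide
      · exact absurd hp h20'
      · decide
      · exact absurd hp h42'
      · decide
      · exact absurd hp h31'
      · decide
      · exact absurd hp h53'
    · intro p hp
      have hcs : p = ((0:Fin 6),(0:Fin 4)) ∨ p = (2,2) ∨ p = (1,1) ∨ p = (3,3) := by
        revert hp; revert p; decide
      rcases hcs with rfl|rfl|rfl|rfl
      exacts [h00, h22, h11, h33]
  · exact absurd (by decide : SMTI.Crossing ((2:Fin 6),(2:Fin 4)) (3,1)) (hNC _ h22 _ h31)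
  · exact absurd (by decide : SMTI.Crossing ((2:Fin 6),(0:Fin 4)) (1,1)) (hNC _ h20 _ h11)
  · right
    refine Finset.Subset.antisymm ?_ ?_
    · intro p hp
      rcases accS_cases p (hsub p hp) with rfl|rfl|rfl|rfl|rfl|rfl|rfl|rfl
      · exact absurd hp h00'
      · decide
      · exact absurd hp h22'
      · decide
      · exact absurd hp h11'
      · decide
      · exact absurd hp h33'
      · decide
    · intro p hp
      have hcs : p = ((2:Fin 6),(0:Fin 4)) ∨ p = (4,2) ∨ p = (3,1) ∨ p = (5,3) := by
        revert hp; revert p; decide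
      rcases hcs with rfl|rfl|rfl|rfl
      exacts [h20, h42, h31, h53]
end

section
/- For every 3SAT instance f in which each variable occurs at most three times, at most twice positively and at most twice negatively, and each clause has two or three literals, the SMTI instance I(f) constructed below admits a weak-SSNM if and only if f is satisfiable. -/
open scoped Classical

/-- A restricted 3SAT instance: `N` variables, `M2` 2-clauses (first) followed by
`M3` 3-clauses; a literal is a pair (variable, polarity); each variable occurs at
most three times, at most twice positively and at most twice negatively. -/
structure CNF3 where
  N : ℕ
  M2 : ℕ
  M3 : ℕ
  clauses : Fin (M2 + M3) → List (Fin N × Bool)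
  len_two : ∀ j : Fin (M2 + M3), j.val < M2 → (clauses j).length = 2
  len_three : ∀ j : Fin (M2 + M3), M2 ≤ j.val → (clauses j).length = 3
  occ_pos : ∀ v : Fin N, (∑ j : Fin (M2 + M3), (clauses j).count (v, true)) ≤ 2
  occ_neg : ∀ v : Fin N, (∑ j : Fin (M2 + M3), (clauses j).count (v, false)) ≤ 2
  occ_total : ∀ v : Fin N,
    (∑ j : Fin (M2 + M3), ((clauses j).count (v, true) + (clauses j).count (v, false))) ≤ 3

/-- `f` is satisfiable: some assignment makes every clause contain a true literal. -/
def CNF3.Satisfiable (f : CNF3) : Prop :=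
  ∃ A : Fin f.N → Bool, ∀ j : Fin (f.M2 + f.M3), ∃ l ∈ f.clauses j, A l.1 = l.2

/-- Number of occurrences of the literal `l` strictly before position `k` of clause `j`
(in clause-then-position order). -/
def CNF3.prevOcc (f : CNF3) (l : Fin f.N × Bool) (j : Fin (f.M2 + f.M3)) (k : ℕ) : ℕ :=
  (∑ j' : Fin (f.M2 + f.M3), if j'.val < j.val then (f.clauses j').count l else 0) +
    ((f.clauses j).take k).count l

/-- The slot (`0`-based) of the variable-gadget man corresponding to an occurrence of
polarity `b` that is preceded by `t` occurrences of the same literal: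
slot `0` = `p_{i,1}` (1st negative), `1` = `p_{i,2}` (1st positive),
`2` = `p_{i,3}` (2nd negative), `3` = `p_{i,4}` (2nd positive). -/
def pslot (b : Bool) (t : ℕ) : Fin 4 :=
  ⟨2 * min t 1 + (if b then 1 else 0), by have := Nat.min_le_right t 1; split <;> omega⟩

/-- The `k`-th literal of clause `j` is an occurrence of variable `i` whose
corresponding variable-gadget man is `p_{i, s+1}`. -/
def CNF3.zToP (f : CNF3) (j : Fin (f.M2 + f.M3)) (k : Fin 3) (i : Fin f.N) (s : Fin 4) :
    Prop :=
  ∃ b : Bool, (f.clauses j)[k.val]? = some (i, b) ∧ s = pslot b (f.prevOcc (i, b) j k.val)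

/-- The men of `I(f)`:  `p i s` is `p_{i+1, s+1}`, `a i s` is `a_{i+1, s+1}`, `sep` is
the separator man `s`, and `y j k` is `y_{j+1, k+1}` (for a 2-clause only `y j 0`,
i.e. `y_j`, has a nonempty list; the remaining `y j k` are dummies). -/
inductive Man5 (N M : ℕ) : Type
  | p : Fin N → Fin 4 → Man5 N M
  | a : Fin N → Fin 2 → Man5 N M
  | sep : Man5 N M
  | y : Fin M → Fin 7 → Man5 N M

/-- The women of `I(f)`:  `q i s` is `q_{i+1, s+1}`, `t` is the separator woman,
`v j k` is `v_{j+1, k+1}` and `z j k` is `z_{j+1, k+1}` (for a 2-clause only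
`z j 0` and `z j 1` have nonempty lists; the rest are dummies). -/
inductive Woman5 (N M : ℕ) : Type
  | q : Fin N → Fin 4 → Woman5 N M
  | t : Woman5 N M
  | v : Fin M → Fin 6 → Woman5 N M
  | z : Fin M → Fin 3 → Woman5 N M

/-- Top-to-bottom position of a man: for each variable `i` the men
`p_{i,1}, p_{i,3}, a_{i,1}, a_{i,2}, p_{i,2}, p_{i,4}`; then the separator `s`;
then for each clause `j` the men `y_{j,1}, …, y_{j,7}`. -/
def Man5.key {N M : ℕ} : Man5 N M → ℕ
  | .p i s => 6 * i.val +
      (if s.val = 0 then 0 else if s.val = 2 then 1 else if s.val = 1 then 4 else 5)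
  | .a i s => 6 * i.val + 2 + s.val
  | .sep => 6 * N
  | .y j k => 6 * N + 1 + 7 * j.val + k.val

/-- Top-to-bottom position of a woman: for each variable `i` the women
`q_{i,1}, q_{i,3}, q_{i,2}, q_{i,4}`; then the separator `t`; then for each clause `j`
the women `v_{j,1}, v_{j,2}, v_{j,3}, z_{j,1}, z_{j,2}, v_{j,4}, v_{j,5}, v_{j,6}, z_{j,3}`. -/
def Woman5.key {N M : ℕ} : Woman5 N M → ℕ
  | .q i s => 4 * i.val +
      (if s.val = 0 then 0 else if s.val = 2 then 1 else if s.val = 1 then 2 else 3)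
  | .t => 4 * N
  | .v j k => 4 * N + 1 + 9 * j.val +
      (if k.val ≤ 2 then k.val else if k.val = 3 then 5 else if k.val = 4 then 6 else 7)
  | .z j k => 4 * N + 1 + 9 * j.val +
      (if k.val = 0 then 3 else if k.val = 1 then 4 else 8)

instance {N M : ℕ} : Preorder (Man5 N M) := Preorder.lift Man5.key
instance {N M : ℕ} : Preorder (Woman5 N M) := Preorder.lift Woman5.key

open Classical in
/-- The SMTI instance `I(f)` of the reduction.  Preference lists (rank `0` before
rank `1`, equal ranks tied):
`p_{i,ℓ}: q_{i,ℓ}, z_{⋯}` (the `z`-woman of the corresponding occurrence of `x_i`);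
`a_{i,1}: (q_{i,1} q_{i,2})`; `a_{i,2}: (q_{i,3} q_{i,4})`;
`q_{i,ℓ}: a_{i,⌈ℓ/2⌉}, p_{i,ℓ}`; `s: t`; `t: s`;
for a 2-clause `C_j`: `y_j: (z_{j,1} z_{j,2})`; `z_{j,k}: y_j, p_{⋯}`;
for a 3-clause `C_j`: `y_{j,1}: (v_{j,1} v_{j,3})`; `y_{j,2}: (v_{j,2} z_{j,1})`;
`y_{j,3}: (v_{j,3} v_{j,4})`; `y_{j,4}: (z_{j,2} v_{j,5})`; `y_{j,5}: (v_{j,4} v_{j,6})`;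
`y_{j,6}: (v_{j,5} z_{j,3})`; `y_{j,7}: v_{j,6}`; `v_{j,1}: y_{j,1}`; `v_{j,2}: y_{j,2}`;
`v_{j,3}: y_{j,1}, y_{j,3}`; `z_{j,1}: y_{j,2}, p_{⋯}`; `z_{j,2}: y_{j,4}, p_{⋯}`;
`v_{j,4}: y_{j,5}, y_{j,3}`; `v_{j,5}: y_{j,6}, y_{j,4}`; `v_{j,6}: y_{j,5}, y_{j,7}`;
`z_{j,3}: y_{j,6}, p_{⋯}`.  Unused persons are dummies with empty lists. -/
noncomputable def instOf (f : CNF3) :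
    SMTI (Man5 f.N (f.M2 + f.M3)) (Woman5 f.N (f.M2 + f.M3)) where
  mpref m w :=
    match m, w with
    | .p i s, .q i' s' => if i' = i ∧ s' = s then some 0 else none
    | .p i s, .z j k => if f.zToP j k i s then some 1 else none
    | .a i s, .q i' s' => if i' = i ∧ s'.val / 2 = s.val then some 0 else none
    | .sep, .t => some 0
    | .y j k, .z j' k' =>
        if j' = j ∧ ((j.val < f.M2 ∧ k.val = 0 ∧ k'.val < 2) ∨
          (f.M2 ≤ j.val ∧ ((k.val = 1 ∧ k'.val = 0) ∨ (k.val = 3 ∧ k'.val = 1) ∨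
            (k.val = 5 ∧ k'.val = 2))))
        then some 0 else none
    | .y j k, .v j' k' =>
        if j' = j ∧ f.M2 ≤ j.val ∧ ((k.val = 0 ∧ (k'.val = 0 ∨ k'.val = 2)) ∨
          (k.val = 1 ∧ k'.val = 1) ∨ (k.val = 2 ∧ (k'.val = 2 ∨ k'.val = 3)) ∨
          (k.val = 3 ∧ k'.val = 4) ∨ (k.val = 4 ∧ (k'.val = 3 ∨ k'.val = 5)) ∨
          (k.val = 5 ∧ k'.val = 4) ∨ (k.val = 6 ∧ k'.val = 5))
        then some 0 else none
    | _, _ => none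
  wpref w m :=
    match w, m with
    | .q i s, .a i' s' => if i' = i ∧ s'.val = s.val / 2 then some 0 else none
    | .q i s, .p i' s' => if i' = i ∧ s' = s then some 1 else none
    | .t, .sep => some 0
    | .z j k, .y j' k' =>
        if j' = j ∧ ((j.val < f.M2 ∧ k'.val = 0 ∧ k.val < 2) ∨
          (f.M2 ≤ j.val ∧ ((k.val = 0 ∧ k'.val = 1) ∨ (k.val = 1 ∧ k'.val = 3) ∨
            (k.val = 2 ∧ k'.val = 5))))
        then some 0 else none
    | .z j k, .p i s => if f.zToP j k i s then some 1 else none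
    | .v j k, .y j' k' =>
        if j' = j ∧ f.M2 ≤ j.val then
          if (k.val = 0 ∧ k'.val = 0) ∨ (k.val = 1 ∧ k'.val = 1) ∨
             (k.val = 2 ∧ k'.val = 0) ∨ (k.val = 3 ∧ k'.val = 4) ∨
             (k.val = 4 ∧ k'.val = 5) ∨ (k.val = 5 ∧ k'.val = 4)
          then some 0
          else if (k.val = 2 ∧ k'.val = 2) ∨ (k.val = 3 ∧ k'.val = 2) ∨
                  (k.val = 4 ∧ k'.val = 3) ∨ (k.val = 5 ∧ k'.val = 6)
          then some 1
          else none
        else none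
    | _, _ => none

namespace Stmt5
open Man5 Woman5

variable {N Mn : ℕ}

lemma man_lt_iff (m m' : Man5 N Mn) : m < m' ↔ m.key < m'.key := Iff.rfl
lemma woman_lt_iff (w w' : Woman5 N Mn) : w < w' ↔ w.key < w'.key := Iff.rfl

lemma crossing_iff (p q : Man5 N Mn × Woman5 N Mn) :
    SMTI.Crossing p q ↔
      (p.1.key < q.1.key ∧ q.2.key < p.2.key) ∨
      (q.1.key < p.1.key ∧ p.2.key < q.2.key) := Iff.rfl

lemma not_rk_lt_zero (o : Option ℕ) : ¬ SMTI.rk o < SMTI.rk (some 0) := by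
  simp [SMTI.rk]

lemma rk_one_lt_top : SMTI.rk (some 1) < SMTI.rk none := by
  simp [SMTI.rk]

def manEquiv (N Mn : ℕ) :
    Man5 N Mn ≃ (Fin N × Fin 4) ⊕ ((Fin N × Fin 2) ⊕ (Unit ⊕ (Fin Mn × Fin 7))) where
  toFun m := match m with
    | .p i s => .inl (i, s)
    | .a i s => .inr (.inl (i, s))
    | .sep => .inr (.inr (.inl ()))
    | .y j k => .inr (.inr (.inr (j, k)))
  invFun x := match x with
    | .inl (i, s) => .p i s
    | .inr (.inl (i, s)) => .a i s
    | .inr (.inr (.inl _)) => .sep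
    | .inr (.inr (.inr (j, k))) => .y j k
  left_inv m := by cases m <;> rfl
  right_inv x := by rcases x with ⟨i, s⟩ | (⟨i, s⟩ | (u | ⟨j, k⟩)) <;> rfl

def womanEquiv (N Mn : ℕ) :
    Woman5 N Mn ≃ (Fin N × Fin 4) ⊕ (Unit ⊕ ((Fin Mn × Fin 6) ⊕ (Fin Mn × Fin 3))) where
  toFun w := match w with
    | .q i s => .inl (i, s)
    | .t => .inr (.inl ())
    | .v j k => .inr (.inr (.inl (j, k)))
    | .z j k => .inr (.inr (.inr (j, k)))
  invFun x := match x with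
    | .inl (i, s) => .q i s
    | .inr (.inl _) => .t
    | .inr (.inr (.inl (j, k))) => .v j k
    | .inr (.inr (.inr (j, k))) => .z j k
  left_inv w := by cases w <;> rfl
  right_inv x := by rcases x with ⟨i, s⟩ | (u | (⟨j, k⟩ | ⟨j, k⟩)) <;> rfl

noncomputable instance : Fintype (Man5 N Mn) := Fintype.ofEquiv _ (manEquiv N Mn).symm
noncomputable instance : Fintype (Woman5 N Mn) := Fintype.ofEquiv _ (womanEquiv N Mn).symm

end Stmt5
namespace Stmt5
open Man5 Woman5

/-- Matching table inside a 3-clause gadget: for unsatisfied-z index `c`,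
`y3map c k` is the partner of `y_{j,k+1}`: `inl k'` = `v j k'`, `inr k'` = `z j k'`. -/
def y3map : ℕ → ℕ → Option (Fin 6 ⊕ Fin 3)
  | 0, 0 => some (.inl 0) | 0, 1 => some (.inl 1) | 0, 2 => some (.inl 2)
  | 0, 3 => some (.inr 1) | 0, 4 => some (.inl 5) | 0, 5 => some (.inr 2)
  | 1, 0 => some (.inl 2) | 1, 1 => some (.inr 0) | 1, 2 => some (.inl 3)
  | 1, 3 => some (.inl 4) | 1, 4 => some (.inl 5) | 1, 5 => some (.inr 2)
  | 2, 0 => some (.inl 2) | 2, 1 => some (.inr 0) | 2, 3 => some (.inr 1)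
  | 2, 4 => some (.inl 3) | 2, 5 => some (.inl 4) | 2, 6 => some (.inl 5)
  | _, _ => none

/-- Key offset of a clause-gadget woman. -/
def woff : Fin 6 ⊕ Fin 3 → ℕ
  | .inl k => if k.val ≤ 2 then k.val else if k.val = 3 then 5 else if k.val = 4 then 6 else 7
  | .inr k => if k.val = 0 then 3 else if k.val = 1 then 4 else 8

def towoman {N Mn : ℕ} (j : Fin Mn) : Fin 6 ⊕ Fin 3 → Woman5 N Mn
  | .inl k => .v j k
  | .inr k => .z j k

lemma y3map_inj : ∀ c k k' : Fin 7, ∀ t t' : Fin 6 ⊕ Fin 3,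
    y3map (min c.val 2) k.val = some t → y3map (min c.val 2) k'.val = some t' →
    t = t' → k = k' := by decide

lemma y3map_mono : ∀ c k k' : Fin 7, ∀ t t' : Fin 6 ⊕ Fin 3,
    y3map (min c.val 2) k.val = some t → y3map (min c.val 2) k'.val = some t' →
    k.val < k'.val → woff t < woff t' := by decide

lemma woff_le (t : Fin 6 ⊕ Fin 3) : woff t ≤ 8 := by
  rcases t with k | k <;> simp [woff] <;> split_ifs <;> omega

lemma y3map_big {c k : ℕ} (hc : 3 ≤ c) : y3map c k = none := by
  unfold y3map
  match c, k with
  | c+3, k => rfl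

lemma y3map_big' {c k : ℕ} (hk : 7 ≤ k) : y3map c k = none := by
  match c, k with
  | 0, k+7 => rfl
  | 1, k+7 => rfl
  | 2, k+7 => rfl
  | c+3, k => exact y3map_big (by omega)

end Stmt5
namespace Stmt5
open Man5 Woman5

variable (f : CNF3)

/-- The matching constructed from an assignment `A` and a choice `c` of a satisfied
literal (index) in each clause. -/
def mate (A : Fin f.N → Bool) (c : Fin (f.M2 + f.M3) → ℕ) :
    Man5 f.N (f.M2 + f.M3) → Option (Woman5 f.N (f.M2 + f.M3))
  | .p i s => if (decide (s.val % 2 = 1)) = A i then some (.q i s) else none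
  | .a i s => if A i then some (.q i ⟨2 * s.val, by omega⟩)
              else some (.q i ⟨2 * s.val + 1, by omega⟩)
  | .sep => some .t
  | .y j k =>
      if j.val < f.M2 then
        if k.val = 0 then some (.z j (if c j = 0 then 1 else 0)) else none
      else (y3map (c j) k.val).map (towoman j)

noncomputable def mateM (A : Fin f.N → Bool) (c : Fin (f.M2 + f.M3) → ℕ) :
    Finset (Man5 f.N (f.M2 + f.M3) × Woman5 f.N (f.M2 + f.M3)) :=
  Finset.univ.filter fun pr => mate f A c pr.1 = some pr.2

@[simp] lemma mem_mateM {A c} {pr : Man5 f.N (f.M2 + f.M3) × Woman5 f.N (f.M2 + f.M3)} :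
    pr ∈ mateM f A c ↔ mate f A c pr.1 = some pr.2 := by
  simp [mateM]

end Stmt5
namespace Stmt5
open Man5 Woman5

lemma y3map_some_lt {c k : ℕ} {t} (h : y3map c k = some t) : c < 3 ∧ k < 7 := by
  constructor
  · by_contra hc; rw [y3map_big (by omega)] at h; cases h
  · by_contra hk; rw [y3map_big' (by omega)] at h; cases h

lemma y3map_inj3 : ∀ (c : Fin 3) (k k' : Fin 7) (t t' : Fin 6 ⊕ Fin 3),
    y3map c.val k.val = some t → y3map c.val k'.val = some t' → t = t' → k = k' := by decide

lemma y3map_mono3 : ∀ (c : Fin 3) (k k' : Fin 7) (t t' : Fin 6 ⊕ Fin 3),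
    y3map c.val k.val = some t → y3map c.val k'.val = some t' →
    k.val < k'.val → woff t < woff t' := by decide

lemma towoman_inj {N Mn : ℕ} {j j' : Fin Mn} {t t'}
    (h : (towoman j t : Woman5 N Mn) = towoman j' t') : j = j' ∧ t = t' := by
  cases t with
  | inl a => cases t' with
    | inl b =>
      obtain ⟨h1, h2⟩ : j = j' ∧ a = b := by simpa [towoman] using h
      exact ⟨h1, by rw [h2]⟩
    | inr b => exact Woman5.noConfusion rfl rfl (heq_of_eq h)
  | inr a => cases t' with
    | inl b => exact Woman5.noConfusion rfl rfl (heq_of_eq h)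
    | inr b =>
      obtain ⟨h1, h2⟩ : j = j' ∧ a = b := by simpa [towoman] using h
      exact ⟨h1, by rw [h2]⟩

variable (f : CNF3)

lemma mate_p_inv {A c i s w} (h : mate f A c (.p i s) = some w) :
    w = .q i s ∧ decide (s.val % 2 = 1) = A i := by
  simp only [mate] at h; split at h
  · exact ⟨(Option.some_inj.1 h).symm, ‹_›⟩
  · cases h

lemma mate_a_inv {A c i s w} (h : mate f A c (.a i s) = some w) :
    (A i = true ∧ w = .q i ⟨2 * s.val, by omega⟩) ∨
    (A i = false ∧ w = .q i ⟨2 * s.val + 1, by omega⟩) := by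
  simp only [mate] at h; split at h
  · exact Or.inl ⟨‹_›, (Option.some_inj.1 h).symm⟩
  · exact Or.inr ⟨by simpa using ‹¬ A i = true›, (Option.some_inj.1 h).symm⟩

lemma mate_sep_inv {A c w} (h : mate f A c .sep = some w) : w = .t :=
  (Option.some_inj.1 h).symm

lemma mate_y_inv {A c j k w} (h : mate f A c (.y j k) = some w) :
    (j.val < f.M2 ∧ k.val = 0 ∧ w = .z j (if c j = 0 then 1 else 0)) ∨
    (f.M2 ≤ j.val ∧ ∃ t, y3map (c j) k.val = some t ∧ w = towoman j t) := by
  simp only [mate] at h; split at h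
  · split at h
    · exact Or.inl ⟨‹_›, ‹_›, (Option.some_inj.1 h).symm⟩
    · cases h
  · obtain ⟨t, ht, rfl⟩ := Option.map_eq_some_iff.1 h
    exact Or.inr ⟨by omega, t, ht, rfl⟩

lemma mate_inj {A c} : ∀ m m' w, mate f A c m = some w → mate f A c m' = some w → m = m' := by
  intro m m' w h h'
  cases m with
  | p i s =>
    obtain ⟨rfl, hp⟩ := mate_p_inv f h
    cases m' with
    | p i' s' =>
      obtain ⟨hq, _⟩ := mate_p_inv f h'
      rw [Woman5.q.injEq] at hq
      obtain ⟨rfl, rfl⟩ := hq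
      rfl
    | a i' s' =>
      exfalso
      rcases mate_a_inv f h' with ⟨hA, hq⟩ | ⟨hA, hq⟩ <;>
      · rw [Woman5.q.injEq] at hq
        obtain ⟨rfl, hs⟩ := hq
        have hs' := congrArg Fin.val hs
        simp only [] at hs'
        rw [hA] at hp
        first
          | (have h2 := of_decide_eq_true hp; omega)
          | (have h2 := of_decide_eq_false hp; omega)
    | sep => exact Woman5.noConfusion rfl rfl (heq_of_eq (mate_sep_inv f h'))
    | y j' k' =>
      rcases mate_y_inv f h' with ⟨_, _, hq⟩ | ⟨_, t, _, hq⟩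
      · exact Woman5.noConfusion rfl rfl (heq_of_eq hq)
      · cases t <;> exact Woman5.noConfusion rfl rfl (heq_of_eq hq)
  | a i s =>
    cases m' with
    | p i' s' =>
      exfalso
      obtain ⟨hw, hp⟩ := mate_p_inv f h'
      rcases mate_a_inv f h with ⟨hA, hq⟩ | ⟨hA, hq⟩
      · rw [hq, Woman5.q.injEq] at hw
        obtain ⟨hii, rfl⟩ := hw
        subst hii
        rw [hA] at hp
        have h2 : (2 * s.val) % 2 = 1 := of_decide_eq_true hp
        omega
      · rw [hq, Woman5.q.injEq] at hw
        obtain ⟨hii, rfl⟩ := hw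
        subst hii
        rw [hA] at hp
        have h2 : ¬ (2 * s.val + 1) % 2 = 1 := of_decide_eq_false hp
        omega
    | a i' s' =>
      rcases mate_a_inv f h with ⟨hA, rfl⟩ | ⟨hA, rfl⟩ <;>
        rcases mate_a_inv f h' with ⟨hA', hq⟩ | ⟨hA', hq⟩ <;>
        (rw [Woman5.q.injEq] at hq; obtain ⟨rfl, hs⟩ := hq;
         have hs' := congrArg Fin.val hs; simp only [] at hs') <;>
        first
          | (have hss : s = s' := Fin.ext (by omega); rw [hss])
          | exact absurd hs' (by omega)
    | sep =>
      rcases mate_a_inv f h with ⟨_, rfl⟩ | ⟨_, rfl⟩ <;>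
        exact Woman5.noConfusion rfl rfl (heq_of_eq (mate_sep_inv f h'))
    | y j' k' =>
      rcases mate_a_inv f h with ⟨_, rfl⟩ | ⟨_, rfl⟩ <;>
        rcases mate_y_inv f h' with ⟨_, _, hq⟩ | ⟨_, t, _, hq⟩ <;>
        first
          | exact Woman5.noConfusion rfl rfl (heq_of_eq hq)
          | (cases t <;> exact Woman5.noConfusion rfl rfl (heq_of_eq hq))
  | sep =>
    have hw := mate_sep_inv f h
    subst hw
    cases m' with
    | p i' s' => exact Woman5.noConfusion rfl rfl (heq_of_eq (mate_p_inv f h').1)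
    | a i' s' =>
      rcases mate_a_inv f h' with ⟨_, hq⟩ | ⟨_, hq⟩ <;> exact Woman5.noConfusion rfl rfl (heq_of_eq hq)
    | sep => rfl
    | y j' k' =>
      rcases mate_y_inv f h' with ⟨_, _, hq⟩ | ⟨_, t, _, hq⟩
      · exact Woman5.noConfusion rfl rfl (heq_of_eq hq)
      · cases t <;> exact Woman5.noConfusion rfl rfl (heq_of_eq hq)
  | y j k =>
    cases m' with
    | p i' s' =>
      obtain ⟨rfl, _⟩ := mate_p_inv f h'
      rcases mate_y_inv f h with ⟨_, _, hq⟩ | ⟨_, t, _, hq⟩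
      · exact Woman5.noConfusion rfl rfl (heq_of_eq hq)
      · cases t <;> exact Woman5.noConfusion rfl rfl (heq_of_eq hq)
    | a i' s' =>
      rcases mate_a_inv f h' with ⟨_, hw⟩ | ⟨_, hw⟩ <;> subst hw <;>
        rcases mate_y_inv f h with ⟨_, _, hq⟩ | ⟨_, t, _, hq⟩ <;>
        first
          | exact Woman5.noConfusion rfl rfl (heq_of_eq hq)
          | (cases t <;> exact Woman5.noConfusion rfl rfl (heq_of_eq hq))
    | sep =>
      have hw := mate_sep_inv f h'; subst hw
      rcases mate_y_inv f h with ⟨_, _, hq⟩ | ⟨_, t, _, hq⟩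
      · exact Woman5.noConfusion rfl rfl (heq_of_eq hq)
      · cases t <;> exact Woman5.noConfusion rfl rfl (heq_of_eq hq)
    | y j' k' =>
      rcases mate_y_inv f h with ⟨h2, hk, hw⟩ | ⟨h3, t, ht, hw⟩ <;>
        rcases mate_y_inv f h' with ⟨h2', hk', hw'⟩ | ⟨h3', t', ht', hw'⟩
      · subst hw
        rw [Woman5.z.injEq] at hw'
        obtain ⟨rfl, -⟩ := hw'
        have : k = k' := Fin.ext (by omega)
        rw [this]
      · subst hw
        cases t' with
        | inl b => exact Woman5.noConfusion rfl rfl (heq_of_eq hw')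
        | inr b =>
          rw [show (towoman j' (Sum.inr b) : Woman5 f.N (f.M2 + f.M3)) = Woman5.z j' b from rfl,
            Woman5.z.injEq] at hw'
          obtain ⟨rfl, -⟩ := hw'
          omega
      · subst hw'
        cases t with
        | inl b => exact Woman5.noConfusion rfl rfl (heq_of_eq hw)
        | inr b =>
          rw [show (towoman j (Sum.inr b) : Woman5 f.N (f.M2 + f.M3)) = Woman5.z j b from rfl,
            Woman5.z.injEq] at hw
          obtain ⟨rfl, -⟩ := hw
          omega
      · subst hw
        obtain ⟨rfl, rfl⟩ := towoman_inj hw'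
        have hc3 := (y3map_some_lt ht).1
        have : k = k' := y3map_inj3 ⟨c j, hc3⟩ k k' t t ht ht' rfl
        rw [this]

end Stmt5
namespace Stmt5
open Man5 Woman5

variable (f : CNF3)

-- Equation lemmas for `instOf` (all `rfl`).
lemma mp_pq (i : Fin f.N) (s : Fin 4) (i') (s') :
    (instOf f).mpref (.p i s) (.q i' s') = if i' = i ∧ s' = s then some 0 else none := rfl
lemma mp_pz (i : Fin f.N) (s : Fin 4) (j) (k) :
    (instOf f).mpref (.p i s) (.z j k) = if f.zToP j k i s then some 1 else none := rfl
lemma mp_pt (i : Fin f.N) (s : Fin 4) : (instOf f).mpref (.p i s) .t = none := rfl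
lemma mp_pv (i : Fin f.N) (s : Fin 4) (j) (k) :
    (instOf f).mpref (.p i s) (.v j k) = none := rfl
lemma mp_aq (i : Fin f.N) (s : Fin 2) (i') (s') :
    (instOf f).mpref (.a i s) (.q i' s') =
      if i' = i ∧ s'.val / 2 = s.val then some 0 else none := rfl
lemma mp_at (i : Fin f.N) (s : Fin 2) : (instOf f).mpref (.a i s) .t = none := rfl
lemma mp_av (i : Fin f.N) (s : Fin 2) (j) (k) : (instOf f).mpref (.a i s) (.v j k) = none := rfl
lemma mp_az (i : Fin f.N) (s : Fin 2) (j) (k) : (instOf f).mpref (.a i s) (.z j k) = none := rfl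
lemma mp_st : (instOf f).mpref .sep .t = some 0 := rfl
lemma mp_sq (i') (s') : (instOf f).mpref .sep (.q i' s') = none := rfl
lemma mp_sv (j) (k) : (instOf f).mpref .sep (.v j k) = none := rfl
lemma mp_sz (j) (k) : (instOf f).mpref .sep (.z j k) = none := rfl
lemma mp_yz (j : Fin (f.M2 + f.M3)) (k : Fin 7) (j') (k') :
    (instOf f).mpref (.y j k) (.z j' k') =
      if j' = j ∧ ((j.val < f.M2 ∧ k.val = 0 ∧ k'.val < 2) ∨
          (f.M2 ≤ j.val ∧ ((k.val = 1 ∧ k'.val = 0) ∨ (k.val = 3 ∧ k'.val = 1) ∨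
            (k.val = 5 ∧ k'.val = 2))))
        then some 0 else none := rfl
lemma mp_yv (j : Fin (f.M2 + f.M3)) (k : Fin 7) (j') (k') :
    (instOf f).mpref (.y j k) (.v j' k') =
      if j' = j ∧ f.M2 ≤ j.val ∧ ((k.val = 0 ∧ (k'.val = 0 ∨ k'.val = 2)) ∨
          (k.val = 1 ∧ k'.val = 1) ∨ (k.val = 2 ∧ (k'.val = 2 ∨ k'.val = 3)) ∨
          (k.val = 3 ∧ k'.val = 4) ∨ (k.val = 4 ∧ (k'.val = 3 ∨ k'.val = 5)) ∨
          (k.val = 5 ∧ k'.val = 4) ∨ (k.val = 6 ∧ k'.val = 5))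
        then some 0 else none := rfl
lemma mp_yq (j : Fin (f.M2 + f.M3)) (k : Fin 7) (i') (s') :
    (instOf f).mpref (.y j k) (.q i' s') = none := rfl
lemma mp_yt (j : Fin (f.M2 + f.M3)) (k : Fin 7) : (instOf f).mpref (.y j k) .t = none := rfl

lemma wp_qa (i : Fin f.N) (s : Fin 4) (i') (s') :
    (instOf f).wpref (.q i s) (.a i' s') =
      if i' = i ∧ s'.val = s.val / 2 then some 0 else none := rfl
lemma wp_qp (i : Fin f.N) (s : Fin 4) (i') (s') :
    (instOf f).wpref (.q i s) (.p i' s') = if i' = i ∧ s' = s then some 1 else none := rfl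
lemma wp_qs (i : Fin f.N) (s : Fin 4) : (instOf f).wpref (.q i s) .sep = none := rfl
lemma wp_qy (i : Fin f.N) (s : Fin 4) (j) (k) : (instOf f).wpref (.q i s) (.y j k) = none := rfl
lemma wp_ts : (instOf f).wpref .t .sep = some 0 := rfl
lemma wp_tp (i) (s) : (instOf f).wpref .t (.p i s) = none := rfl
lemma wp_ta (i) (s) : (instOf f).wpref .t (.a i s) = none := rfl
lemma wp_ty (j) (k) : (instOf f).wpref .t (.y j k) = none := rfl
lemma wp_zy (j : Fin (f.M2 + f.M3)) (k : Fin 3) (j') (k') :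
    (instOf f).wpref (.z j k) (.y j' k') =
      if j' = j ∧ ((j.val < f.M2 ∧ k'.val = 0 ∧ k.val < 2) ∨
          (f.M2 ≤ j.val ∧ ((k.val = 0 ∧ k'.val = 1) ∨ (k.val = 1 ∧ k'.val = 3) ∨
            (k.val = 2 ∧ k'.val = 5))))
        then some 0 else none := rfl
lemma wp_zp (j : Fin (f.M2 + f.M3)) (k : Fin 3) (i) (s) :
    (instOf f).wpref (.z j k) (.p i s) = if f.zToP j k i s then some 1 else none := rfl
lemma wp_za (j : Fin (f.M2 + f.M3)) (k : Fin 3) (i) (s) :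
    (instOf f).wpref (.z j k) (.a i s) = none := rfl
lemma wp_zs (j : Fin (f.M2 + f.M3)) (k : Fin 3) : (instOf f).wpref (.z j k) .sep = none := rfl
lemma wp_vy (j : Fin (f.M2 + f.M3)) (k : Fin 6) (j') (k') :
    (instOf f).wpref (.v j k) (.y j' k') =
      if j' = j ∧ f.M2 ≤ j.val then
          if (k.val = 0 ∧ k'.val = 0) ∨ (k.val = 1 ∧ k'.val = 1) ∨
             (k.val = 2 ∧ k'.val = 0) ∨ (k.val = 3 ∧ k'.val = 4) ∨
             (k.val = 4 ∧ k'.val = 5) ∨ (k.val = 5 ∧ k'.val = 4)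
          then some 0
          else if (k.val = 2 ∧ k'.val = 2) ∨ (k.val = 3 ∧ k'.val = 2) ∨
                  (k.val = 4 ∧ k'.val = 3) ∨ (k.val = 5 ∧ k'.val = 6)
          then some 1
          else none
        else none := rfl
lemma wp_vp (j : Fin (f.M2 + f.M3)) (k : Fin 6) (i) (s) :
    (instOf f).wpref (.v j k) (.p i s) = none := rfl
lemma wp_va (j : Fin (f.M2 + f.M3)) (k : Fin 6) (i) (s) :
    (instOf f).wpref (.v j k) (.a i s) = none := rfl
lemma wp_vs (j : Fin (f.M2 + f.M3)) (k : Fin 6) : (instOf f).wpref (.v j k) .sep = none := rfl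

end Stmt5

namespace Stmt5
open Man5 Woman5

lemma spec1 : ∀ (c : Fin 3) (k : Fin 7) (b : Fin 6),
    y3map c.val k.val = some (.inl b) →
    ((k.val = 0 ∧ (b.val = 0 ∨ b.val = 2)) ∨
      (k.val = 1 ∧ b.val = 1) ∨ (k.val = 2 ∧ (b.val = 2 ∨ b.val = 3)) ∨
      (k.val = 3 ∧ b.val = 4) ∨ (k.val = 4 ∧ (b.val = 3 ∨ b.val = 5)) ∨
      (k.val = 5 ∧ b.val = 4) ∨ (k.val = 6 ∧ b.val = 5)) ∧
    (((b.val = 0 ∧ k.val = 0) ∨ (b.val = 1 ∧ k.val = 1) ∨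
         (b.val = 2 ∧ k.val = 0) ∨ (b.val = 3 ∧ k.val = 4) ∨
         (b.val = 4 ∧ k.val = 5) ∨ (b.val = 5 ∧ k.val = 4)) ∨
      ((b.val = 2 ∧ k.val = 2) ∨ (b.val = 3 ∧ k.val = 2) ∨
         (b.val = 4 ∧ k.val = 3) ∨ (b.val = 5 ∧ k.val = 6))) := by decide

lemma spec2 : ∀ (c : Fin 3) (k : Fin 7) (b : Fin 3),
    y3map c.val k.val = some (.inr b) →
    (k.val = 1 ∧ b.val = 0) ∨ (k.val = 3 ∧ b.val = 1) ∨ (k.val = 5 ∧ b.val = 2) := by decide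

lemma spec2' : ∀ (c : Fin 3) (k : Fin 7) (b : Fin 3),
    y3map c.val k.val = some (.inr b) →
    (b.val = 0 ∧ k.val = 1) ∨ (b.val = 1 ∧ k.val = 3) ∨ (b.val = 2 ∧ k.val = 5) := by decide

variable (f : CNF3)

lemma mate_acc {A c} :
    ∀ m w, mate f A c m = some w → (instOf f).Acc m w := by
  intro m w h
  cases m with
  | p i s =>
    obtain ⟨rfl, -⟩ := mate_p_inv f h
    refine ⟨?_, ?_⟩
    · rw [mp_pq, if_pos ⟨rfl, rfl⟩]; rfl
    · rw [wp_qp, if_pos ⟨rfl, rfl⟩]; rfl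
  | a i s =>
    rcases mate_a_inv f h with ⟨-, rfl⟩ | ⟨-, rfl⟩
    · refine ⟨?_, ?_⟩
      · rw [mp_aq, if_pos ⟨rfl, show 2 * s.val / 2 = s.val by omega⟩]; rfl
      · rw [wp_qa, if_pos ⟨rfl, show s.val = 2 * s.val / 2 by omega⟩]; rfl
    · refine ⟨?_, ?_⟩
      · rw [mp_aq, if_pos ⟨rfl, show (2 * s.val + 1) / 2 = s.val by omega⟩]; rfl
      · rw [wp_qa, if_pos ⟨rfl, show s.val = (2 * s.val + 1) / 2 by omega⟩]; rfl
  | sep =>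
    obtain rfl := mate_sep_inv f h
    exact ⟨by rw [mp_st]; rfl, by rw [wp_ts]; rfl⟩
  | y j k =>
    rcases mate_y_inv f h with ⟨h2, hk0, rfl⟩ | ⟨h3, t, ht, rfl⟩
    · have hz : (if c j = 0 then (1 : Fin 3) else 0).val < 2 := by split <;> decide
      refine ⟨?_, ?_⟩
      · rw [mp_yz, if_pos ⟨rfl, Or.inl ⟨h2, hk0, hz⟩⟩]; rfl
      · rw [wp_zy, if_pos ⟨rfl, Or.inl ⟨h2, hk0, hz⟩⟩]; rfl
    · obtain ⟨hc3, -⟩ := y3map_some_lt ht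
      cases t with
      | inl b =>
        obtain ⟨hm, hw⟩ := spec1 ⟨c j, hc3⟩ k b ht
        refine ⟨?_, ?_⟩
        · rw [show towoman j (Sum.inl b) = (Woman5.v j b : Woman5 f.N (f.M2 + f.M3)) from rfl,
            mp_yv]
          split
          · rfl
          · next hn => exact absurd ⟨rfl, h3, hm⟩ hn
        · rw [show towoman j (Sum.inl b) = (Woman5.v j b : Woman5 f.N (f.M2 + f.M3)) from rfl,
            wp_vy]
          split
          · split
            · rfl
            · next hn0 =>
                split
                · rfl
                · next hn1 => exact absurd (hw.resolve_left hn0) hn1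
          · next hn => exact absurd ⟨rfl, h3⟩ hn
      | inr b =>
        have hm := spec2 ⟨c j, hc3⟩ k b ht
        have hm' := spec2' ⟨c j, hc3⟩ k b ht
        refine ⟨?_, ?_⟩
        · rw [show towoman j (Sum.inr b) = (Woman5.z j b : Woman5 f.N (f.M2 + f.M3)) from rfl,
            mp_yz]
          split
          · rfl
          · next hn => exact absurd ⟨rfl, Or.inr ⟨h3, hm⟩⟩ hn
        · rw [show towoman j (Sum.inr b) = (Woman5.z j b : Woman5 f.N (f.M2 + f.M3)) from rfl,
            wp_zy]
          split
          · rfl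
          · next hn => exact absurd ⟨rfl, Or.inr ⟨h3, hm'⟩⟩ hn

end Stmt5
namespace Stmt5
open Man5 Woman5

variable (f : CNF3)

lemma key_towoman (j : Fin (f.M2 + f.M3)) (t) :
    (towoman j t : Woman5 f.N (f.M2 + f.M3)).key = 4 * f.N + 1 + 9 * j.val + woff t := by
  cases t <;> rfl

lemma coord_p {A c} {i : Fin f.N} {s w} (h : mate f A c (.p i s) = some w) :
    ∃ ow ≤ 3, (Man5.p i s : Man5 f.N (f.M2 + f.M3)).key
        = 6 * i.val + ow + (if A i = true then 2 else 0) ∧ w.key = 4 * i.val + ow := by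
  obtain ⟨rfl, hp⟩ := mate_p_inv f h
  obtain ⟨sv, hsv⟩ := s
  cases hA : A i with
  | true =>
    rw [hA] at hp
    have h1 := of_decide_eq_true hp
    simp only [hA, if_true]
    interval_cases sv
    · exact absurd (show (0:ℕ) % 2 = 1 from h1) (by omega)
    · exact ⟨2, by omega, by simp [Man5.key, Woman5.key]⟩
    · exact absurd (show (2:ℕ) % 2 = 1 from h1) (by omega)
    · exact ⟨3, by omega, by simp [Man5.key, Woman5.key]⟩
  | false =>
    rw [hA] at hp
    have h1 := of_decide_eq_false hp
    simp only [hA, Bool.false_eq_true, if_false]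
    interval_cases sv
    · exact ⟨0, by omega, by simp [Man5.key, Woman5.key]⟩
    · exact absurd (show Fin.val ⟨1, hsv⟩ % 2 = 1 from rfl) h1
    · exact ⟨1, by omega, by simp [Man5.key, Woman5.key]⟩
    · exact absurd (show Fin.val ⟨3, hsv⟩ % 2 = 1 from (by norm_num : (3:ℕ) % 2 = 1)) h1

lemma coord_a {A c} {i : Fin f.N} {s w} (h : mate f A c (.a i s) = some w) :
    ∃ ow ≤ 3, (Man5.a i s : Man5 f.N (f.M2 + f.M3)).key
        = 6 * i.val + ow + (if A i = true then 2 else 0) ∧ w.key = 4 * i.val + ow := by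
  obtain ⟨sv, hsv⟩ := s
  rcases mate_a_inv f h with ⟨hA, rfl⟩ | ⟨hA, rfl⟩ <;>
    simp only [hA, if_true, Bool.false_eq_true, if_false] <;>
    interval_cases sv
  · exact ⟨0, by omega, by simp [Man5.key, Woman5.key]⟩
  · exact ⟨1, by omega, by simp [Man5.key, Woman5.key]⟩
  · exact ⟨2, by omega, by simp [Man5.key, Woman5.key]⟩
  · exact ⟨3, by omega, by simp [Man5.key, Woman5.key]⟩

lemma mate_coord {A c m w} (h : mate f A c m = some w) :
    (∃ i : Fin f.N, ∃ ow ≤ 3,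
        m.key = 6 * i.val + ow + (if A i = true then 2 else 0) ∧ w.key = 4 * i.val + ow) ∨
    (m.key = 6 * f.N ∧ w.key = 4 * f.N) ∨
    (∃ j : Fin (f.M2 + f.M3), ∃ k : Fin 7, m = .y j k ∧ ∃ ow ≤ 8,
        m.key = 6 * f.N + 1 + 7 * j.val + k.val ∧ w.key = 4 * f.N + 1 + 9 * j.val + ow) := by
  cases m with
  | p i s => exact Or.inl ⟨i, coord_p f h⟩
  | a i s => exact Or.inl ⟨i, coord_a f h⟩
  | sep => obtain rfl := mate_sep_inv f h; exact Or.inr (Or.inl ⟨rfl, rfl⟩)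
  | y j k =>
    refine Or.inr (Or.inr ⟨j, k, rfl, ?_⟩)
    rcases mate_y_inv f h with ⟨h2, hk0, rfl⟩ | ⟨h3, t, ht, rfl⟩
    · refine ⟨if c j = 0 then 4 else 3, by split <;> omega, rfl, ?_⟩
      split <;> rfl
    · exact ⟨woff t, woff_le t, rfl, key_towoman f j t⟩

lemma mate_mono {A c} :
    ∀ m w m' w', mate f A c m = some w → mate f A c m' = some w' →
      m.key < m'.key → w.key < w'.key := by
  intro m w m' w' h h' hlt
  have hd : ∀ i : Fin f.N, (if A i = true then 2 else 0) ≤ 2 := fun i => by split <;> omega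
  rcases mate_coord f h with ⟨i, ow, how, hm1, hw1⟩ | ⟨hm1, hw1⟩ | ⟨j, k, rfl, ow, how, hm1, hw1⟩ <;>
    rcases mate_coord f h' with ⟨i', ow', how', hm1', hw1'⟩ | ⟨hm1', hw1'⟩ |
      ⟨j', k', rfl, ow', how', hm1', hw1'⟩
  · -- var var
    rcases eq_or_ne i i' with rfl | hne
    · omega
    · have hne' : i.val ≠ i'.val := fun hh => hne (Fin.ext hh)
      have := hd i; have := hd i'
      omega
  · have := hd i; have := i.isLt; omega
  · have := hd i; have := i.isLt; omega
  · have := hd i'; have := i'.isLt; omega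
  · omega
  · omega
  · have := hd i'; have := i'.isLt; omega
  · omega
  · -- y y
    rcases eq_or_ne j j' with rfl | hne
    · -- same clause
      have hkk : k.val < k'.val := by omega
      rcases mate_y_inv f h with ⟨h2, hk0, rfl⟩ | ⟨h3, t, ht, rfl⟩ <;>
        rcases mate_y_inv f h' with ⟨h2', hk0', hwq⟩ | ⟨h3', t', ht', hwq⟩
      · omega
      · omega
      · omega
      · have hc3 := (y3map_some_lt ht).1
        have hmono := y3map_mono3 ⟨c j, hc3⟩ k k' t t' ht ht' hkk
        subst hwq
        rw [key_towoman, key_towoman]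
        omega
    · have hne' : j.val ≠ j'.val := fun hh => hne (Fin.ext hh)
      omega

end Stmt5
namespace Stmt5
open Man5 Woman5

variable (f : CNF3)

lemma mate_p_eq {A c} (i : Fin f.N) (s : Fin 4) :
    mate f A c (.p i s) =
      if (decide (s.val % 2 = 1)) = A i then some (.q i s) else none := rfl
lemma mate_a_eq {A c} (i : Fin f.N) (s : Fin 2) :
    mate f A c (.a i s) = if A i = true then some (.q i ⟨2 * s.val, by omega⟩)
      else some (.q i ⟨2 * s.val + 1, by omega⟩) := rfl
lemma mate_y_eq {A c} (j : Fin (f.M2 + f.M3)) (k : Fin 7) :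
    mate f A c (.y j k) =
      if j.val < f.M2 then
        (if k.val = 0 then some (.z j (if c j = 0 then 1 else 0)) else none)
      else (y3map (c j) k.val).map (towoman j) := rfl

lemma isSome_none_elim {α} (h : (none : Option α).isSome) : False := by simp at h

-- man-side inversions
lemma isSome_p_inv {i s w} (h : ((instOf f).mpref (.p i s) w).isSome) :
    w = .q i s ∨ ∃ j k, w = .z j k ∧ f.zToP j k i s := by
  cases w with
  | q i' s' =>
    rw [mp_pq] at h
    rcases em (i' = i ∧ s' = s) with ⟨rfl, rfl⟩ | hc
    · exact Or.inl rfl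
    · rw [if_neg hc] at h; exact absurd h (by simp)
  | t => rw [mp_pt] at h; exact absurd h (by simp)
  | v j k => rw [mp_pv] at h; exact absurd h (by simp)
  | z j k =>
    rw [mp_pz] at h
    rcases em (f.zToP j k i s) with hc | hc
    · exact Or.inr ⟨j, k, rfl, hc⟩
    · rw [if_neg hc] at h; exact absurd h (by simp)

lemma isSome_a_inv {i s w} (h : ((instOf f).mpref (.a i s) w).isSome) :
    ∃ s' : Fin 4, w = .q i s' ∧ s'.val / 2 = s.val := by
  cases w with
  | q i' s' =>
    rw [mp_aq] at h
    rcases em (i' = i ∧ s'.val / 2 = s.val) with ⟨rfl, hc⟩ | hc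
    · exact ⟨s', rfl, hc⟩
    · rw [if_neg hc] at h; exact absurd h (by simp)
  | t => rw [mp_at] at h; exact absurd h (by simp)
  | v j k => rw [mp_av] at h; exact absurd h (by simp)
  | z j k => rw [mp_az] at h; exact absurd h (by simp)

lemma isSome_sep_inv {w} (h : ((instOf f).mpref .sep w).isSome) : w = .t := by
  cases w with
  | t => rfl
  | q i' s' => rw [mp_sq] at h; exact absurd h (by simp)
  | v j k => rw [mp_sv] at h; exact absurd h (by simp)
  | z j k => rw [mp_sz] at h; exact absurd h (by simp)

lemma isSome_y_inv {j k w} (h : ((instOf f).mpref (.y j k) w).isSome) :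
    (∃ k' : Fin 3, w = .z j k' ∧ ((j.val < f.M2 ∧ k.val = 0 ∧ k'.val < 2) ∨
       (f.M2 ≤ j.val ∧ ((k.val = 1 ∧ k'.val = 0) ∨ (k.val = 3 ∧ k'.val = 1) ∨
         (k.val = 5 ∧ k'.val = 2))))) ∨
    (∃ k' : Fin 6, w = .v j k' ∧ f.M2 ≤ j.val ∧ ((k.val = 0 ∧ (k'.val = 0 ∨ k'.val = 2)) ∨
       (k.val = 1 ∧ k'.val = 1) ∨ (k.val = 2 ∧ (k'.val = 2 ∨ k'.val = 3)) ∨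
       (k.val = 3 ∧ k'.val = 4) ∨ (k.val = 4 ∧ (k'.val = 3 ∨ k'.val = 5)) ∨
       (k.val = 5 ∧ k'.val = 4) ∨ (k.val = 6 ∧ k'.val = 5))) := by
  cases w with
  | q i' s' => rw [mp_yq] at h; exact absurd h (by simp)
  | t => rw [mp_yt] at h; exact absurd h (by simp)
  | z j' k' =>
    rw [mp_yz] at h
    split at h
    · next hc => exact Or.inl ⟨k', by rw [hc.1], hc.2⟩
    · exact absurd h (by simp)
  | v j' k' =>
    rw [mp_yv] at h
    split at h
    · next hc => exact Or.inr ⟨k', by rw [hc.1], hc.2⟩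
    · exact absurd h (by simp)

-- woman-side inversions
lemma isSome_q_inv {i s m} (h : ((instOf f).wpref (.q i s) m).isSome) :
    (∃ s' : Fin 2, m = .a i s' ∧ s'.val = s.val / 2) ∨ m = .p i s := by
  cases m with
  | a i' s' =>
    rw [wp_qa] at h
    split at h
    · next hc => exact Or.inl ⟨s', by rw [hc.1], hc.2⟩
    · exact absurd h (by simp)
  | p i' s' =>
    rw [wp_qp] at h
    split at h
    · next hc => exact Or.inr (by rw [hc.1, hc.2])
    · exact absurd h (by simp)
  | sep => rw [wp_qs] at h; exact absurd h (by simp)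
  | y j k => rw [wp_qy] at h; exact absurd h (by simp)

lemma isSome_t_inv {m} (h : ((instOf f).wpref .t m).isSome) : m = .sep := by
  cases m with
  | sep => rfl
  | p i s => rw [wp_tp] at h; exact absurd h (by simp)
  | a i s => rw [wp_ta] at h; exact absurd h (by simp)
  | y j k => rw [wp_ty] at h; exact absurd h (by simp)

lemma isSome_z_inv {j k m} (h : ((instOf f).wpref (.z j k) m).isSome) :
    (∃ k' : Fin 7, m = .y j k' ∧ ((j.val < f.M2 ∧ k'.val = 0 ∧ k.val < 2) ∨
       (f.M2 ≤ j.val ∧ ((k.val = 0 ∧ k'.val = 1) ∨ (k.val = 1 ∧ k'.val = 3) ∨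
         (k.val = 2 ∧ k'.val = 5))))) ∨
    (∃ i s, m = .p i s ∧ f.zToP j k i s) := by
  cases m with
  | y j' k' =>
    rw [wp_zy] at h
    split at h
    · next hc => exact Or.inl ⟨k', by rw [hc.1], hc.2⟩
    · exact absurd h (by simp)
  | p i s =>
    rw [wp_zp] at h
    split at h
    · next hc => exact Or.inr ⟨i, s, rfl, hc⟩
    · exact absurd h (by simp)
  | a i s => rw [wp_za] at h; exact absurd h (by simp)
  | sep => rw [wp_zs] at h; exact absurd h (by simp)

lemma isSome_v_inv {j k m} (h : ((instOf f).wpref (.v j k) m).isSome) :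
    ∃ k' : Fin 7, m = .y j k' ∧ f.M2 ≤ j.val ∧
      (((k.val = 0 ∧ k'.val = 0) ∨ (k.val = 1 ∧ k'.val = 1) ∨
        (k.val = 2 ∧ k'.val = 0) ∨ (k.val = 3 ∧ k'.val = 4) ∨
        (k.val = 4 ∧ k'.val = 5) ∨ (k.val = 5 ∧ k'.val = 4)) ∨
       ((k.val = 2 ∧ k'.val = 2) ∨ (k.val = 3 ∧ k'.val = 2) ∨
        (k.val = 4 ∧ k'.val = 3) ∨ (k.val = 5 ∧ k'.val = 6))) := by
  cases m with
  | y j' k' =>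
    rw [wp_vy] at h
    split at h
    · next hc =>
      split at h
      · next hc0 => exact ⟨k', by rw [hc.1], hc.2, Or.inl hc0⟩
      · split at h
        · next hc1 => exact ⟨k', by rw [hc.1], hc.2, Or.inr hc1⟩
        · exact absurd h (by simp)
    · exact absurd h (by simp)
  | p i s => rw [wp_vp] at h; exact absurd h (by simp)
  | a i s => rw [wp_va] at h; exact absurd h (by simp)
  | sep => rw [wp_vs] at h; exact absurd h (by simp)

lemma mate_mrank {A c} : ∀ m w, mate f A c m = some w → (instOf f).mpref m w = some 0 := by
  intro m w h
  cases m with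
  | p i s =>
    obtain ⟨rfl, -⟩ := mate_p_inv f h
    rw [mp_pq, if_pos ⟨rfl, rfl⟩]
  | a i s =>
    rcases mate_a_inv f h with ⟨-, rfl⟩ | ⟨-, rfl⟩
    · rw [mp_aq, if_pos ⟨rfl, show 2 * s.val / 2 = s.val by omega⟩]
    · rw [mp_aq, if_pos ⟨rfl, show (2 * s.val + 1) / 2 = s.val by omega⟩]
  | sep => obtain rfl := mate_sep_inv f h; rw [mp_st]
  | y j k =>
    rcases mate_y_inv f h with ⟨h2, hk0, rfl⟩ | ⟨h3, t, ht, rfl⟩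
    · have hz : (if c j = 0 then (1 : Fin 3) else 0).val < 2 := by split <;> decide
      rw [mp_yz, if_pos ⟨rfl, Or.inl ⟨h2, hk0, hz⟩⟩]
    · obtain ⟨hc3, -⟩ := y3map_some_lt ht
      cases t with
      | inl b =>
        obtain ⟨hm, -⟩ := spec1 ⟨c j, hc3⟩ k b ht
        rw [show towoman j (Sum.inl b) = (Woman5.v j b : Woman5 f.N (f.M2 + f.M3)) from rfl,
          mp_yv, if_pos ⟨rfl, h3, hm⟩]
      | inr b =>
        have hm := spec2 ⟨c j, hc3⟩ k b ht
        rw [show towoman j (Sum.inr b) = (Woman5.z j b : Woman5 f.N (f.M2 + f.M3)) from rfl,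
          mp_yz, if_pos ⟨rfl, Or.inr ⟨h3, hm⟩⟩]

end Stmt5
namespace Stmt5
open Man5 Woman5

lemma zmatch3 : ∀ (c k : Fin 3), c.val ≠ k.val → ∃ yk : Fin 7,
    y3map c.val yk.val = some (.inr k) ∧
    ((k.val = 0 ∧ yk.val = 1) ∨ (k.val = 1 ∧ yk.val = 3) ∨ (k.val = 2 ∧ yk.val = 5)) := by
  decide

lemma y3some135 : ∀ (c : Fin 3) (k : Fin 7) (k' : Fin 3),
    ((k.val = 1 ∧ k'.val = 0) ∨ (k.val = 3 ∧ k'.val = 1) ∨ (k.val = 5 ∧ k'.val = 2)) →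
    (y3map c.val k.val).isSome := by decide

lemma vmatch : ∀ (c : Fin 3) (k : Fin 7) (k' : Fin 6), y3map c.val k.val = none →
    ((k.val = 0 ∧ (k'.val = 0 ∨ k'.val = 2)) ∨ (k.val = 1 ∧ k'.val = 1) ∨
     (k.val = 2 ∧ (k'.val = 2 ∨ k'.val = 3)) ∨ (k.val = 3 ∧ k'.val = 4) ∨
     (k.val = 4 ∧ (k'.val = 3 ∨ k'.val = 5)) ∨ (k.val = 5 ∧ k'.val = 4) ∨
     (k.val = 6 ∧ k'.val = 5)) →
    ∃ yk : Fin 7, y3map c.val yk.val = some (.inl k') ∧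
      ((k'.val = 0 ∧ yk.val = 0) ∨ (k'.val = 1 ∧ yk.val = 1) ∨ (k'.val = 2 ∧ yk.val = 0) ∨
       (k'.val = 3 ∧ yk.val = 4) ∨ (k'.val = 4 ∧ yk.val = 5) ∨ (k'.val = 5 ∧ yk.val = 4)) := by
  decide

variable (f : CNF3)

theorem backward (hs : f.Satisfiable) : ∃ M, (instOf f).IsSSNM M := by
  classical
  obtain ⟨A, hA⟩ := hs
  have hch : ∀ j : Fin (f.M2 + f.M3), ∃ n : ℕ, ∃ l, (f.clauses j)[n]? = some l ∧ A l.1 = l.2 := by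
    intro j
    obtain ⟨l, hl, hAl⟩ := hA j
    obtain ⟨n, hn, hnl⟩ := List.getElem_of_mem hl
    exact ⟨n, l, by rw [List.getElem?_eq_getElem hn, hnl], hAl⟩
  choose c lit hget hAc using hch
  have hlen : ∀ j, c j < (f.clauses j).length := by
    intro j
    by_contra hh
    have hj := hget j
    rw [List.getElem?_eq_none (by omega)] at hj
    exact Option.noConfusion rfl (heq_of_eq hj)
  -- the key helper: any z-woman whose index differs from the chosen one is matched at rank 0
  have hzmatch : ∀ (j : Fin (f.M2 + f.M3)) (k : Fin 3), k.val < (f.clauses j).length →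
      k.val ≠ c j → ∃ m', mate f A c m' = some (.z j k) ∧
        (instOf f).wpref (.z j k) m' = some 0 := by
    intro j k hklen hkc
    by_cases h2 : j.val < f.M2
    · have hl2 : (f.clauses j).length = 2 := f.len_two j h2
      have hcc := hlen j
      refine ⟨.y j 0, ?_, ?_⟩
      · rw [mate_y_eq, if_pos h2, if_pos (show ((0 : Fin 7)).val = 0 from rfl)]
        refine congrArg _ (congrArg _ (Fin.ext ?_))
        split
        · next hc0 => show 1 = k.val; omega
        · next hc0 => show 0 = k.val; omega
      · rw [wp_zy, if_pos ⟨rfl, Or.inl ⟨h2, rfl, by omega⟩⟩]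
    · have h3 : f.M2 ≤ j.val := by omega
      have hc3 : c j < 3 := by have := hlen j; rw [f.len_three j h3] at this; exact this
      obtain ⟨yk, hy, hcond⟩ := zmatch3 ⟨c j, hc3⟩ k (fun hh => hkc hh.symm)
      have hy' : y3map (c j) yk.val = some (.inr k) := hy
      refine ⟨.y j yk, ?_, ?_⟩
      · rw [mate_y_eq, if_neg h2, hy']; rfl
      · rw [wp_zy, if_pos ⟨rfl, Or.inr ⟨h3, hcond⟩⟩]
  refine ⟨mateM f A c, ⟨?_, ?_⟩, ?_, ?_⟩
  · -- acceptability
    intro p hp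
    exact mate_acc f p.1 p.2 ((mem_mateM f).1 hp)
  · -- uniqueness
    rintro ⟨m, w⟩ hp ⟨m', w'⟩ hq hor
    have h1 := (mem_mateM f).1 hp
    have h2 := (mem_mateM f).1 hq
    rcases hor with he | he
    · obtain rfl : m = m' := he
      have h3 : w = w' := Option.some_inj.1 (h1.symm.trans h2)
      rw [h3]
    · obtain rfl : w = w' := he
      rw [mate_inj f m m' w h1 h2]
  · -- noncrossing
    rintro ⟨m, w⟩ hp ⟨m', w'⟩ hq hcross
    have h1 := (mem_mateM f).1 hp
    have h2 := (mem_mateM f).1 hq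
    rcases hcross with ⟨ha, hb⟩ | ⟨ha, hb⟩
    · have := mate_mono f m w m' w' h1 h2 ha
      exact absurd hb (by simp only [woman_lt_iff] at *; omega)
    · have := mate_mono f m' w' m w h2 h1 ha
      exact absurd hb (by simp only [woman_lt_iff] at *; omega)
  · -- no blocking pair
    rintro m w ⟨⟨hacc1, hacc2⟩, hnm, hm, hw⟩
    cases hmate : mate f A c m with
    | some w0 =>
      have h0 := hm w0 ((mem_mateM f).2 hmate)
      rw [mate_mrank f m w0 hmate] at h0
      exact not_rk_lt_zero _ h0
    | none =>
      cases m with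
      | sep => exact Option.noConfusion rfl (heq_of_eq hmate)
      | a i s =>
        rw [mate_a_eq] at hmate
        split at hmate <;> exact Option.noConfusion rfl (heq_of_eq hmate)
      | p i s =>
        rw [mate_p_eq] at hmate
        split at hmate
        · exact Option.noConfusion rfl (heq_of_eq hmate)
        next hp =>
        rcases isSome_p_inv f hacc1 with rfl | ⟨j, k, rfl, hzp⟩
        · -- w = q i s : her partner is the a-man
          cases hAi : A i with
          | true =>
            rw [hAi] at hp
            have hev : s.val % 2 ≠ 1 := fun hh => hp (decide_eq_true hh)
            have hmem : mate f A c (.a i ⟨s.val / 2, by omega⟩) = some (.q i s) := by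
              rw [mate_a_eq, if_pos hAi]
              exact congrArg _ (congrArg _ (Fin.ext (by show 2 * (s.val / 2) = s.val; omega)))
            have h0 := hw _ ((mem_mateM f).2 hmem)
            rw [wp_qa, if_pos ⟨rfl, rfl⟩] at h0
            exact not_rk_lt_zero _ h0
          | false =>
            rw [hAi] at hp
            have hodd : s.val % 2 = 1 := by
              by_contra hh; exact hp (decide_eq_false hh)
            have hmem : mate f A c (.a i ⟨s.val / 2, by omega⟩) = some (.q i s) := by
              rw [mate_a_eq, if_neg (by rw [hAi]; exact Bool.false_ne_true)]
              exact congrArg _ (congrArg _ (Fin.ext (by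
                show 2 * (s.val / 2) + 1 = s.val; omega)))
            have h0 := hw _ ((mem_mateM f).2 hmem)
            rw [wp_qa, if_pos ⟨rfl, rfl⟩] at h0
            exact not_rk_lt_zero _ h0
        · -- w = z j k with zToP
          obtain ⟨b, hget', hpslot⟩ := hzp
          have hklen : k.val < (f.clauses j).length := by
            by_contra hh
            rw [List.getElem?_eq_none (by omega)] at hget'
            exact Option.noConfusion rfl (heq_of_eq hget')
          have hAb : A i ≠ b := by
            intro hEq
            apply hp
            rw [hEq, hpslot]
            cases b
            · exact decide_eq_false (show ¬((2 * min (f.prevOcc (i, false) j k.val) 1 + 0) % 2 = 1)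
                by omega)
            · exact decide_eq_true (show (2 * min (f.prevOcc (i, true) j k.val) 1 + 1) % 2 = 1
                by omega)
          have hkc : k.val ≠ c j := by
            intro hh
            rw [hh, hget j] at hget'
            have hl := Option.some_inj.1 hget'
            have h5 := hAc j
            rw [hl] at h5
            exact hAb h5
          obtain ⟨m', hmem, hrank⟩ := hzmatch j k hklen hkc
          have h0 := hw m' ((mem_mateM f).2 hmem)
          rw [hrank] at h0
          exact not_rk_lt_zero _ h0
      | y j k =>
        rw [mate_y_eq] at hmate
        split at hmate
        · -- 2-clause
          next h2 =>
          split at hmate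
          · exact Option.noConfusion rfl (heq_of_eq hmate)
          next hk0 =>
          rcases isSome_y_inv f hacc1 with ⟨k', rfl, hcnd⟩ | ⟨k', rfl, h3, hcnd⟩
          · rcases hcnd with ⟨-, hk, -⟩ | ⟨h3, -⟩
            · exact hk0 hk
            · omega
          · omega
        · -- 3-clause, y3map none
          next h2 =>
          have h3 : f.M2 ≤ j.val := by omega
          have hc3 : c j < 3 := by
            have := hlen j; rw [f.len_three j h3] at this; exact this
          have hnone : y3map (c j) k.val = none := by
            cases hyy : y3map (c j) k.val with
            | none => rfl
            | some t => rw [hyy] at hmate; exact Option.noConfusion rfl (heq_of_eq hmate)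
          rcases isSome_y_inv f hacc1 with ⟨k', rfl, hcnd⟩ | ⟨k', rfl, h3', hcnd⟩
          · rcases hcnd with ⟨hlt, -, -⟩ | ⟨-, hcnd⟩
            · omega
            · have := y3some135 ⟨c j, hc3⟩ k k' hcnd
              rw [hnone] at this
              exact isSome_none_elim this
          · obtain ⟨yk, hy, hcond⟩ := vmatch ⟨c j, hc3⟩ k k' hnone hcnd
            have hy' : y3map (c j) yk.val = some (.inl k') := hy
            have hmem : mate f A c (.y j yk) = some (.v j k') := by
              rw [mate_y_eq, if_neg h2, hy']; rfl
            have h0 := hw _ ((mem_mateM f).2 hmem)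
            rw [wp_vy f j k' j yk, if_pos ⟨rfl, h3⟩, if_pos hcond] at h0
            exact not_rk_lt_zero _ h0

end Stmt5
namespace Stmt5
open Man5 Woman5

lemma rk_zero_lt_one : SMTI.rk (some 0) < SMTI.rk (some 1) := by
  simp [SMTI.rk]

variable (f : CNF3)
variable {M : Finset (Man5 f.N (f.M2 + f.M3) × Woman5 f.N (f.M2 + f.M3))}

lemma sep_mem (h : (instOf f).IsSSNM M) : (Man5.sep, Woman5.t) ∈ M := by
  by_contra hni
  refine h.2.2 .sep .t ⟨⟨?_, ?_⟩, hni, ?_, ?_⟩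
  · rw [mp_st]; rfl
  · rw [wp_ts]; rfl
  · intro w' hw'
    have he := isSome_sep_inv f (h.1.1 _ hw').1
    obtain rfl : w' = Woman5.t := he
    exact absurd hw' hni
  · intro m' hm'
    have he := isSome_t_inv f (h.1.1 _ hm').2
    obtain rfl : m' = Man5.sep := he
    exact absurd hm' hni

lemma no_pz (h : (instOf f).IsSSNM M) :
    ∀ (i : Fin f.N) (s : Fin 4) (j) (k), (Man5.p i s, Woman5.z j k) ∉ M := by
  intro i s j k hmem
  refine h.2.1 _ hmem _ (sep_mem f h) (Or.inl ⟨?_, ?_⟩)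
  · show Man5.key (.p i s) < Man5.key (.sep (N := f.N) (M := f.M2 + f.M3))
    have := i.isLt
    simp only [Man5.key]
    split_ifs <;> omega
  · show Woman5.key (.t (N := f.N) (M := f.M2 + f.M3)) < Woman5.key (.z j k)
    simp only [Woman5.key]
    split_ifs <;> omega

lemma a_matched (h : (instOf f).IsSSNM M) (i : Fin f.N) (s' : Fin 2) :
    ∃ s : Fin 4, s.val / 2 = s'.val ∧ (Man5.a i s', Woman5.q i s) ∈ M := by
  obtain ⟨⟨hacc, huniq⟩, hnc, hnb⟩ := h
  by_contra hno
  push_neg at hno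
  have hunm : ∀ w, (Man5.a i s', w) ∉ M := by
    intro w hw
    obtain ⟨s'', rfl, hs⟩ := isSome_a_inv f (hacc _ hw).1
    exact hno s'' hs hw
  refine hnb (.a i s') (.q i ⟨2 * s'.val, by omega⟩) ⟨⟨?_, ?_⟩, hunm _, ?_, ?_⟩
  · rw [mp_aq, if_pos ⟨rfl, show 2 * s'.val / 2 = s'.val by omega⟩]; rfl
  · rw [wp_qa, if_pos ⟨rfl, show s'.val = 2 * s'.val / 2 by omega⟩]; rfl
  · intro w' hw'; exact absurd hw' (hunm _)
  · intro m' hm'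
    rcases isSome_q_inv f (hacc _ hm').2 with ⟨s'', rfl, hs⟩ | rfl
    · have hs2 : s''.val = 2 * s'.val / 2 := hs
      have : s'' = s' := Fin.ext (by omega)
      subst this
      exact absurd hm' (hunm _)
    · rw [wp_qa f i ⟨2 * s'.val, by omega⟩ i s',
        if_pos ⟨rfl, show s'.val = 2 * s'.val / 2 by omega⟩,
        wp_qp, if_pos ⟨rfl, rfl⟩]
      exact rk_zero_lt_one

end Stmt5
namespace Stmt5
open Man5 Woman5

variable (f : CNF3)
variable {M : Finset (Man5 f.N (f.M2 + f.M3) × Woman5 f.N (f.M2 + f.M3))}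

lemma clause_unmatched (h : (instOf f).IsSSNM M) (j : Fin (f.M2 + f.M3)) :
    ∃ k : Fin 3, k.val < (f.clauses j).length ∧ ∀ m', (m', Woman5.z j k) ∉ M := by
  obtain ⟨⟨hacc, huniq⟩, hnc, hnb⟩ := h
  by_cases h2 : j.val < f.M2
  · -- 2-clause
    have hl2 : (f.clauses j).length = 2 := f.len_two j h2
    have hzpart : ∀ (kz : Fin 3) m', (m', Woman5.z j kz) ∈ M →
        m' = Man5.y j ⟨0, by decide⟩ := by
      intro kz m' hm'
      rcases isSome_z_inv f (hacc _ hm').2 with ⟨k', he, hcnd⟩ | ⟨i, s, he, -⟩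
      · obtain rfl : m' = Man5.y j k' := he
        refine congrArg _ (Fin.ext ?_)
        show k'.val = 0
        rcases hcnd with ⟨-, hk', -⟩ | ⟨h3, -⟩
        · exact hk'
        · omega
      · obtain rfl : m' = Man5.p i s := he
        exact absurd hm' (no_pz f ⟨⟨hacc, huniq⟩, hnc, hnb⟩ i s j kz)
    by_cases hz0 : ∃ m', (m', Woman5.z j ⟨0, by decide⟩) ∈ M
    · by_cases hz1 : ∃ m', (m', Woman5.z j ⟨1, by decide⟩) ∈ M
      · exfalso
        obtain ⟨m0, h0⟩ := hz0
        obtain ⟨m1, h1⟩ := hz1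
        obtain rfl := hzpart _ _ h0
        obtain rfl := hzpart _ _ h1
        have := huniq _ h0 _ h1 (Or.inl rfl)
        have h5 := congrArg Prod.snd this
        rw [Woman5.z.injEq] at h5
        exact absurd (show (0:ℕ) = 1 from congrArg Fin.val h5.2) (by omega)
      · exact ⟨⟨1, by decide⟩, show (1:ℕ) < (f.clauses j).length by omega,
          fun m' hm' => hz1 ⟨m', hm'⟩⟩
    · exact ⟨⟨0, by decide⟩, show (0:ℕ) < (f.clauses j).length by omega,
          fun m' hm' => hz0 ⟨m', hm'⟩⟩
  · -- 3-clause
    have h3 : f.M2 ≤ j.val := by omega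
    have hl3 : (f.clauses j).length = 3 := f.len_three j h3
    have hzpart : ∀ (kz : Fin 3) m', (m', Woman5.z j kz) ∈ M →
        m' = Man5.y j ⟨2 * kz.val + 1, by omega⟩ := by
      intro kz m' hm'
      rcases isSome_z_inv f (hacc _ hm').2 with ⟨k', he, hcnd⟩ | ⟨i, s, he, -⟩
      · obtain rfl : m' = Man5.y j k' := he
        refine congrArg _ (Fin.ext ?_)
        show k'.val = 2 * kz.val + 1
        rcases hcnd with ⟨hh, -, -⟩ | ⟨-, hcnd⟩
        · omega
        · rcases hcnd with ⟨e1, e2⟩ | ⟨e1, e2⟩ | ⟨e1, e2⟩ <;> omega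
      · obtain rfl : m' = Man5.p i s := he
        exact absurd hm' (no_pz f ⟨⟨hacc, huniq⟩, hnc, hnb⟩ i s j kz)
    by_cases hz0 : ∃ m', (m', Woman5.z j ⟨0, by decide⟩) ∈ M
    swap
    · exact ⟨⟨0, by decide⟩, show (0:ℕ) < (f.clauses j).length by omega,
        fun m' hm' => hz0 ⟨m', hm'⟩⟩
    by_cases hz1 : ∃ m', (m', Woman5.z j ⟨1, by decide⟩) ∈ M
    swap
    · exact ⟨⟨1, by decide⟩, show (1:ℕ) < (f.clauses j).length by omega,
        fun m' hm' => hz1 ⟨m', hm'⟩⟩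
    by_cases hz2 : ∃ m', (m', Woman5.z j ⟨2, by decide⟩) ∈ M
    swap
    · exact ⟨⟨2, by decide⟩, show (2:ℕ) < (f.clauses j).length by omega,
        fun m' hm' => hz2 ⟨m', hm'⟩⟩
    exfalso
    obtain ⟨m0, h0⟩ := hz0
    obtain ⟨m1, h1⟩ := hz1
    obtain ⟨m2, h2'⟩ := hz2
    obtain rfl := hzpart _ _ h0
    obtain rfl := hzpart _ _ h1
    obtain rfl := hzpart _ _ h2'
    -- h0 : (y j 1, z j 0) ∈ M, h1 : (y j 3, z j 1) ∈ M, h2' : (y j 5, z j 2) ∈ M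
    -- y_{j,3} (index 2) is unmatched
    have hy2unm : ∀ w, (Man5.y j ⟨2, by decide⟩, w) ∉ M := by
      intro w hw2
      rcases isSome_y_inv f (hacc _ hw2).1 with ⟨k', he, hcnd⟩ | ⟨k', he, -, hcnd⟩
      · obtain rfl : w = Woman5.z j k' := he
        have e2 : (⟨2, by decide⟩ : Fin 7).val = 2 := rfl
        rcases hcnd with ⟨hh, -, -⟩ | ⟨-, hcnd⟩
        · omega
        · rcases hcnd with ⟨e1, -⟩ | ⟨e1, -⟩ | ⟨e1, -⟩ <;> omega
      · obtain rfl : w = Woman5.v j k' := he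
        have e2 : (⟨2, by decide⟩ : Fin 7).val = 2 := rfl
        have hk' : k'.val = 2 ∨ k'.val = 3 := by
          rcases hcnd with ⟨e1, -⟩ | ⟨e1, -⟩ | ⟨-, e1⟩ | ⟨e1, -⟩ | ⟨e1, -⟩ | ⟨e1, -⟩ | ⟨e1, -⟩ <;>
            first
              | (exfalso; omega)
              | exact e1
        rcases hk' with hk' | hk'
        · -- (y2, v2) crosses (y1, z0)
          refine hnc _ hw2 _ h0 (Or.inr ⟨?_, ?_⟩)
          · show Man5.key (Man5.y j ⟨2 * (0:ℕ) * 0 + 1, by decide⟩)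
              < Man5.key (Man5.y j ⟨2, by decide⟩)
            simp [Man5.key]
          · show Woman5.key (Woman5.v j k') < Woman5.key (Woman5.z j ⟨0, by decide⟩)
            simp [Woman5.key, hk']
        · -- (y2, v3) crosses (y3, z1)
          refine hnc _ hw2 _ h1 (Or.inl ⟨?_, ?_⟩)
          · show Man5.key (Man5.y j ⟨2, by decide⟩)
              < Man5.key (Man5.y j ⟨2 * (1:ℕ) + 1, by decide⟩)
            simp [Man5.key]
          · show Woman5.key (Woman5.z j ⟨1, by decide⟩) < Woman5.key (Woman5.v j k')
            simp [Woman5.key, hk']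
    -- v_{j,3} (index 2) is matched to y_{j,1} (index 0)
    have hv2 : (Man5.y j ⟨0, by decide⟩, Woman5.v j ⟨2, by decide⟩) ∈ M := by
      by_contra hn02
      refine hnb (.y j ⟨2, by decide⟩) (.v j ⟨2, by decide⟩)
        ⟨⟨?_, ?_⟩, hy2unm _, fun w' hw' => absurd hw' (hy2unm _), ?_⟩
      · rw [mp_yv, if_pos ⟨rfl, h3, Or.inr (Or.inr (Or.inl ⟨rfl, Or.inl rfl⟩))⟩]; rfl
      · rw [wp_vy, if_pos ⟨rfl, h3⟩, if_neg (by
          intro hcc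
          have e1 : (⟨2, by decide⟩ : Fin 6).val = 2 := rfl
          have e2 : (⟨2, by decide⟩ : Fin 7).val = 2 := rfl
          omega), if_pos (Or.inl ⟨rfl, rfl⟩)]; rfl
      · intro m' hm'
        obtain ⟨k'', he, -, hcnd⟩ := isSome_v_inv f (hacc _ hm').2
        obtain rfl : m' = Man5.y j k'' := he
        have hk'' : k''.val = 0 ∨ k''.val = 2 := by
          have e2 : (⟨2, by decide⟩ : Fin 6).val = 2 := rfl
          rcases hcnd with (⟨e1,e3⟩|⟨e1,e3⟩|⟨e1,e3⟩|⟨e1,e3⟩|⟨e1,e3⟩|⟨e1,e3⟩)|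
            (⟨e1,e3⟩|⟨e1,e3⟩|⟨e1,e3⟩|⟨e1,e3⟩) <;> omega
        rcases hk'' with hk'' | hk''
        · obtain rfl : k'' = ⟨0, by decide⟩ := Fin.ext hk''
          exact absurd hm' hn02
        · obtain rfl : k'' = ⟨2, by decide⟩ := Fin.ext hk''
          exact absurd hm' (hy2unm _)
    -- v_{j,4} (index 3) is matched to y_{j,5} (index 4)
    have hv3 : (Man5.y j ⟨4, by decide⟩, Woman5.v j ⟨3, by decide⟩) ∈ M := by
      by_contra hn43
      refine hnb (.y j ⟨2, by decide⟩) (.v j ⟨3, by decide⟩)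
        ⟨⟨?_, ?_⟩, hy2unm _, fun w' hw' => absurd hw' (hy2unm _), ?_⟩
      · rw [mp_yv, if_pos ⟨rfl, h3, Or.inr (Or.inr (Or.inl ⟨rfl, Or.inr rfl⟩))⟩]; rfl
      · rw [wp_vy, if_pos ⟨rfl, h3⟩, if_neg (by
          intro hcc
          have e1 : (⟨3, by decide⟩ : Fin 6).val = 3 := rfl
          have e2 : (⟨2, by decide⟩ : Fin 7).val = 2 := rfl
          omega), if_pos (Or.inr (Or.inl ⟨rfl, rfl⟩))]
        rfl
      · intro m' hm'
        obtain ⟨k'', he, -, hcnd⟩ := isSome_v_inv f (hacc _ hm').2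
        obtain rfl : m' = Man5.y j k'' := he
        have hk'' : k''.val = 4 ∨ k''.val = 2 := by
          have e2 : (⟨3, by decide⟩ : Fin 6).val = 3 := rfl
          rcases hcnd with (⟨e1,e3⟩|⟨e1,e3⟩|⟨e1,e3⟩|⟨e1,e3⟩|⟨e1,e3⟩|⟨e1,e3⟩)|
            (⟨e1,e3⟩|⟨e1,e3⟩|⟨e1,e3⟩|⟨e1,e3⟩) <;> omega
        rcases hk'' with hk'' | hk''
        · obtain rfl : k'' = ⟨4, by decide⟩ := Fin.ext hk''
          exact absurd hm' hn43
        · obtain rfl : k'' = ⟨2, by decide⟩ := Fin.ext hk''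
          exact absurd hm' (hy2unm _)
    -- v_{j,6} (index 5) is unmatched
    have hv5unm : ∀ m', (m', Woman5.v j ⟨5, by decide⟩) ∉ M := by
      intro m' hm'
      obtain ⟨k'', he, -, hcnd⟩ := isSome_v_inv f (hacc _ hm').2
      obtain rfl : m' = Man5.y j k'' := he
      have hk'' : k''.val = 4 ∨ k''.val = 6 := by
        have e2 : (⟨5, by decide⟩ : Fin 6).val = 5 := rfl
        rcases hcnd with (⟨e1,e3⟩|⟨e1,e3⟩|⟨e1,e3⟩|⟨e1,e3⟩|⟨e1,e3⟩|⟨e1,e3⟩)|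
          (⟨e1,e3⟩|⟨e1,e3⟩|⟨e1,e3⟩|⟨e1,e3⟩) <;> omega
      rcases hk'' with hk'' | hk''
      · obtain rfl : k'' = ⟨4, by decide⟩ := Fin.ext hk''
        have := huniq _ hm' _ hv3 (Or.inl rfl)
        have h5 := congrArg Prod.snd this
        rw [Woman5.v.injEq] at h5
        exact absurd (show (5:ℕ) = 3 from congrArg Fin.val h5.2) (by omega)
      · obtain rfl : k'' = ⟨6, by decide⟩ := Fin.ext hk''
        refine hnc _ hm' _ h2' (Or.inr ⟨?_, ?_⟩)
        · show Man5.key (Man5.y j ⟨2 * (2:ℕ) + 1, by decide⟩)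
            < Man5.key (Man5.y j ⟨6, by decide⟩)
          simp [Man5.key]
        · show Woman5.key (Woman5.v j ⟨5, by decide⟩) < Woman5.key (Woman5.z j ⟨2, by decide⟩)
          simp [Woman5.key]
    -- y_{j,7} (index 6) is unmatched
    have hy6unm : ∀ w, (Man5.y j ⟨6, by decide⟩, w) ∉ M := by
      intro w hw6
      rcases isSome_y_inv f (hacc _ hw6).1 with ⟨k', he, hcnd⟩ | ⟨k', he, -, hcnd⟩
      · obtain rfl : w = Woman5.z j k' := he
        have e6 : (⟨6, by decide⟩ : Fin 7).val = 6 := rfl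
        rcases hcnd with ⟨hh, -, -⟩ | ⟨-, hcnd⟩
        · omega
        · rcases hcnd with ⟨e1, -⟩ | ⟨e1, -⟩ | ⟨e1, -⟩ <;> omega
      · obtain rfl : w = Woman5.v j k' := he
        have e6 : (⟨6, by decide⟩ : Fin 7).val = 6 := rfl
        have hk' : k'.val = 5 := by
          rcases hcnd with ⟨e1, -⟩ | ⟨e1, -⟩ | ⟨e1, -⟩ | ⟨e1, -⟩ | ⟨e1, -⟩ | ⟨e1, -⟩ | ⟨-, e1⟩ <;>
            first
              | (exfalso; omega)
              | exact e1
        obtain rfl : k' = ⟨5, by decide⟩ := Fin.ext hk'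
        exact absurd hw6 (hv5unm _)
    -- blocking pair (y_{j,7}, v_{j,6})
    refine hnb (.y j ⟨6, by decide⟩) (.v j ⟨5, by decide⟩)
      ⟨⟨?_, ?_⟩, hy6unm _, fun w' hw' => absurd hw' (hy6unm _),
        fun m' hm' => absurd hm' (hv5unm _)⟩
    · rw [mp_yv, if_pos ⟨rfl, h3, Or.inr (Or.inr (Or.inr (Or.inr (Or.inr (Or.inr ⟨rfl, rfl⟩)))))⟩]
      rfl
    · rw [wp_vy, if_pos ⟨rfl, h3⟩, if_neg (by
        intro hcc
        have e1 : (⟨5, by decide⟩ : Fin 6).val = 5 := rfl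
        have e2 : (⟨6, by decide⟩ : Fin 7).val = 6 := rfl
        omega), if_pos (Or.inr (Or.inr (Or.inr ⟨rfl, rfl⟩)))]
      rfl

end Stmt5
namespace Stmt5
open Man5 Woman5

variable (f : CNF3)
variable {M : Finset (Man5 f.N (f.M2 + f.M3) × Woman5 f.N (f.M2 + f.M3))}

lemma p_matched (h : (instOf f).IsSSNM M) {j k i s} (hzp : f.zToP j k i s)
    (hzunm : ∀ m', (m', Woman5.z j k) ∉ M) : (Man5.p i s, Woman5.q i s) ∈ M := by
  obtain ⟨⟨hacc, huniq⟩, hnc, hnb⟩ := h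
  by_contra hpq
  have hpunm : ∀ w, (Man5.p i s, w) ∉ M := by
    intro w hw
    rcases isSome_p_inv f (hacc _ hw).1 with he | ⟨j', k', he, hzp'⟩
    · obtain rfl : w = Woman5.q i s := he
      exact hpq hw
    · obtain rfl : w = Woman5.z j' k' := he
      exact no_pz f ⟨⟨hacc, huniq⟩, hnc, hnb⟩ i s j' k' hw
  refine hnb (.p i s) (.z j k) ⟨⟨?_, ?_⟩, hzunm _, fun w' hw' => absurd hw' (hpunm _),
    fun m' hm' => absurd hm' (hzunm _)⟩
  · rw [mp_pz, if_pos hzp]; rfl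
  · rw [wp_zp, if_pos hzp]; rfl

theorem forward (h : ∃ M, (instOf f).IsSSNM M) : f.Satisfiable := by
  classical
  obtain ⟨M, hM⟩ := h
  obtain ⟨⟨hacc, huniq⟩, hnc, hnb⟩ := hM
  have hM' : (instOf f).IsSSNM M := ⟨⟨hacc, huniq⟩, hnc, hnb⟩
  refine ⟨fun i => decide ((Man5.a i ⟨0, by decide⟩, Woman5.q i ⟨0, by decide⟩) ∈ M), ?_⟩
  intro j
  obtain ⟨k, hklen, hzunm⟩ := clause_unmatched f hM' j
  have hget' : (f.clauses j)[k.val]? = some ((f.clauses j)[k.val]'hklen) :=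
    List.getElem?_eq_getElem hklen
  rcases hli : (f.clauses j)[k.val]'hklen with ⟨i, b⟩
  have hmem_list : (i, b) ∈ f.clauses j := by rw [← hli]; exact List.getElem_mem hklen
  set s : Fin 4 := pslot b (f.prevOcc (i, b) j k.val) with hs
  have hzp : f.zToP j k i s := ⟨b, by rw [hget', hli], hs⟩
  have hpq := p_matched f hM' hzp hzunm
  obtain ⟨s0, hs0div, ha0⟩ := a_matched f hM' i ⟨0, by decide⟩
  have hs0div' : s0.val / 2 = 0 := hs0div
  have hs0v : s0.val = 0 ∨ s0.val = 1 := by omega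
  refine ⟨(i, b), hmem_list, ?_⟩
  show decide ((Man5.a i ⟨0, by decide⟩, Woman5.q i ⟨0, by decide⟩) ∈ M) = b
  cases b with
  | true =>
    apply decide_eq_true
    have hsv' : s.val = 2 * min (f.prevOcc (i, true) j k.val) 1 + 1 := by rw [hs]; rfl
    have hsvals : s.val = 1 ∨ s.val = 3 := by omega
    have hs00 : s0.val = 0 := by
      rcases hs0v with h00 | h01
      · exact h00
      exfalso
      rcases hsvals with h1 | h3
      · have he : s = s0 := Fin.ext (by omega)
        rw [he] at hpq
        have := huniq _ hpq _ ha0 (Or.inr rfl)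
        exact Man5.noConfusion rfl rfl (heq_of_eq (congrArg Prod.fst this))
      · obtain ⟨s1, hs1div, ha1⟩ := a_matched f hM' i ⟨1, by decide⟩
        have hs1div' : s1.val / 2 = 1 := hs1div
        have hs1v : s1.val = 2 ∨ s1.val = 3 := by omega
        rcases hs1v with h12 | h13
        · refine hnc _ ha0 _ ha1 (Or.inl ⟨?_, ?_⟩)
          · show Man5.key (Man5.a i ⟨0, by decide⟩) < Man5.key (Man5.a i ⟨1, by decide⟩)
            simp [Man5.key]
          · show Woman5.key (Woman5.q i s1) < Woman5.key (Woman5.q i s0)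
            have e1 : (Woman5.q i s1 : Woman5 f.N (f.M2 + f.M3)).key = 4 * i.val + 1 := by
              simp [Woman5.key, h12]
            have e0 : (Woman5.q i s0 : Woman5 f.N (f.M2 + f.M3)).key = 4 * i.val + 2 := by
              simp [Woman5.key, h01]
            omega
        · have he : s = s1 := Fin.ext (by omega)
          rw [he] at hpq
          have := huniq _ hpq _ ha1 (Or.inr rfl)
          exact Man5.noConfusion rfl rfl (heq_of_eq (congrArg Prod.fst this))
    have he0 : s0 = ⟨0, by decide⟩ := Fin.ext hs00
    rw [he0] at ha0
    exact ha0
  | false =>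
    apply decide_eq_false
    intro hmem
    have hsv' : s.val = 2 * min (f.prevOcc (i, false) j k.val) 1 + 0 := by rw [hs]; rfl
    have hsvals : s.val = 0 ∨ s.val = 2 := by omega
    rcases hsvals with h0 | h2v
    · have he : s = ⟨0, by decide⟩ := Fin.ext h0
      rw [he] at hpq
      have := huniq _ hpq _ hmem (Or.inr rfl)
      exact Man5.noConfusion rfl rfl (heq_of_eq (congrArg Prod.fst this))
    · refine hnc _ hpq _ hmem (Or.inl ⟨?_, ?_⟩)
      · show Man5.key (Man5.p i s) < Man5.key (Man5.a i ⟨0, by decide⟩)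
        have e1 : (Man5.p i s : Man5 f.N (f.M2 + f.M3)).key = 6 * i.val + 1 := by
          simp [Man5.key, h2v]
        have e2 : (Man5.a i ⟨0, by decide⟩ : Man5 f.N (f.M2 + f.M3)).key = 6 * i.val + 2 := by
          simp [Man5.key]
        omega
      · show Woman5.key (Woman5.q i ⟨0, by decide⟩) < Woman5.key (Woman5.q i s)
        have e1 : (Woman5.q i ⟨0, by decide⟩ : Woman5 f.N (f.M2 + f.M3)).key = 4 * i.val := by
          simp [Woman5.key]
        have e2 : (Woman5.q i s : Woman5 f.N (f.M2 + f.M3)).key = 4 * i.val + 1 := by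
          simp [Woman5.key, h2v]
        omega

end Stmt5

/-- the SMTI instance `I(f)` admits a weak-SSNM iff `f` is satisfiable. -/
theorem stmt5 (f : CNF3) :
    (∃ M, (instOf f).IsSSNM M) ↔ f.Satisfiable :=
  ⟨Stmt5.forward f, Stmt5.backward f⟩
end
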